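/- arXiv:2312.13089 — 5 statements merged into one kernel-verified Lean document; each statement's English description precedes it below -/
import Mathlib

section
/- Let m, n be positive integers and j a non-negative integer such that m ≤ n and j < n. Then the number of homomorphisms f from the path P_m to the path P_n with f(0) = j is |Hom^j(P_m, P_n)| = Σ_{t = max{0, ⌈(j−(n−m))/2⌉}}^{⌈(m+j)/2⌉ − 1} C(m−1, t) − Σ_{t=0}^{⌊(j−(n−m))/2⌋ − 1} C(m−1, t) − Σ_{t=0}^{⌊(m−j−1)/2⌋ − 1} C(m−1, t), where C(a,b) denotes the binomial coefficient and an empty sum (one whose upper limit is below its lower limit) is 0. -/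
/-- The binomial coefficient `C(a, b)` with an integer lower argument, taken to be `0`
when `b < 0` (and, via `Nat.choose`, also `0` when `b > a`). -/
def chooseZ (a : ℕ) (b : ℤ) : ℕ := if 0 ≤ b then a.choose b.toNat else 0

/-- `f : Fin m → ℕ` is a homomorphism from the path `P_m` to the path `P_n`. -/
def IsPathHom (m n : ℕ) (f : Fin m → ℕ) : Prop :=
  (∀ x, f x < n) ∧
  ∀ (x : ℕ) (h : x + 1 < m),
    f ⟨x + 1, h⟩ = f ⟨x, Nat.lt_of_succ_lt h⟩ + 1 ∨
    f ⟨x, Nat.lt_of_succ_lt h⟩ = f ⟨x + 1, h⟩ + 1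

/-- `|Hom^j(P_m, P_n)|`: the number of homomorphisms `f : P_m → P_n` with `f(0) = j`. -/
noncomputable def homCount (m n j : ℕ) : ℕ :=
  Nat.card {f : Fin m → ℕ // IsPathHom m n f ∧ ∀ h : 0 < m, f ⟨0, h⟩ = j}

lemma chooseZ_neg {L : ℕ} {t : ℤ} (h : t < 0) : chooseZ L t = 0 := by
  simp [chooseZ, not_le.mpr h]

lemma chooseZ_succ (L : ℕ) (t : ℤ) (ht : 0 ≤ t) :
    chooseZ (L+1) t = chooseZ L t + chooseZ L (t-1) := by
  rcases eq_or_lt_of_le ht with h | h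
  · simp [chooseZ, ← h]
  · have h1 : (0:ℤ) ≤ t - 1 := by omega
    simp only [chooseZ, if_pos ht, if_pos h1]
    have : t.toNat = (t-1).toNat + 1 := by omega
    rw [this, Nat.choose_succ_succ']
    ring

noncomputable def Qsum (L : ℕ) (b : ℤ) : ℤ := ∑ t ∈ Finset.Icc (0:ℤ) b, (chooseZ L t : ℤ)

lemma Qsum_neg {L : ℕ} {b : ℤ} (h : b < 0) : Qsum L b = 0 := by
  unfold Qsum
  rw [Finset.Icc_eq_empty (by omega)]
  simp

lemma Qsum_zero {b : ℤ} (h : 0 ≤ b) : Qsum 0 b = 1 := by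
  unfold Qsum
  rw [Finset.sum_eq_single 0]
  · simp [chooseZ]
  · intro t ht hne
    simp only [Finset.mem_Icc] at ht
    have h0 : (0:ℤ) ≤ t := ht.1
    simp only [chooseZ, if_pos h0]
    rw [Nat.choose_eq_zero_of_lt (by omega)]
    simp
  · intro h'
    simp only [Finset.mem_Icc] at h'
    omega

lemma Qsum_pascal (L : ℕ) (b : ℤ) : Qsum (L+1) b = Qsum L b + Qsum L (b-1) := by
  rcases lt_or_ge b 0 with h | h
  · rw [Qsum_neg h, Qsum_neg h, Qsum_neg (by omega)]; ring
  · unfold Qsum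
    have key : ∀ t ∈ Finset.Icc (0:ℤ) b, (chooseZ (L+1) t : ℤ) =
        (chooseZ L t : ℤ) + (chooseZ L (t-1) : ℤ) := by
      intro t ht
      simp only [Finset.mem_Icc] at ht
      rw [chooseZ_succ L t ht.1]; push_cast; ring
    rw [Finset.sum_congr rfl key, Finset.sum_add_distrib]
    congr 1
    -- ∑ t in Icc 0 b, chooseZ L (t-1) = ∑ t in Icc 0 (b-1), chooseZ L t
    have : Finset.Icc (0:ℤ) b = (Finset.Icc (-1:ℤ) (b-1)).map (addRightEmbedding 1) := by
      rw [Finset.map_add_right_Icc]; norm_num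
    rw [this, Finset.sum_map]
    simp only [addRightEmbedding_apply, add_sub_cancel_right]
    have hins : Finset.Icc (-1:ℤ) (b-1) = insert (-1) (Finset.Icc 0 (b-1)) := by
      ext t; simp only [Finset.mem_Icc, Finset.mem_insert]; omega
    rw [hins, Finset.sum_insert (by simp)]
    rw [chooseZ_neg (by norm_num : (-1:ℤ) < 0)]
    simp

lemma Qsum_symm (L : ℕ) {a b : ℤ} (h : a + b = (L:ℤ) - 1) : Qsum L a + Qsum L b = 2^L := by
  induction L generalizing a b with
  | zero =>
    rcases le_or_gt 0 a with ha | ha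
    · rw [Qsum_zero ha, Qsum_neg (by omega)]; norm_num
    · rw [Qsum_neg ha, Qsum_zero (by omega)]; norm_num
  | succ L ih =>
    rw [Qsum_pascal, Qsum_pascal]
    have h1 : Qsum L a + Qsum L (b-1) = 2^L := ih (by push_cast at h ⊢; omega)
    have h2 : Qsum L (a-1) + Qsum L b = 2^L := ih (by push_cast at h ⊢; omega)
    rw [pow_succ]
    linarith

lemma Qsum_full (L : ℕ) {b : ℤ} (h : (L:ℤ) ≤ b) : Qsum L b = 2^L := by
  have := Qsum_symm L (a := b) (b := (L:ℤ) - 1 - b) (by ring)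
  rw [Qsum_neg (show (L:ℤ)-1-b < 0 by omega)] at this
  linarith

noncomputable def Fform (L : ℕ) (n j : ℤ) : ℤ :=
  Qsum L (((L:ℤ) + j) / 2) - Qsum L ((j - n + L) / 2) - Qsum L ((j - n + L - 1) / 2)
    - Qsum L (((L:ℤ) - j - 2) / 2)

lemma Fform_base {n j : ℤ} (h0 : 0 ≤ j) (hjn : j < n) : Fform 0 n j = 1 := by
  unfold Fform
  rw [Qsum_zero (by omega), Qsum_neg (by omega), Qsum_neg (by omega), Qsum_neg (by omega)]
  ring

lemma Fform_neg_one {L : ℕ} {n : ℤ} (h : (L:ℤ) ≤ n) : Fform L n (-1) = 0 := by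
  unfold Fform
  rw [show ((L:ℤ) + -1) / 2 = ((L:ℤ) - (-1) - 2) / 2 by ring_nf]
  rw [Qsum_neg (show ((-1:ℤ) - n + L) / 2 < 0 by omega),
      Qsum_neg (show ((-1:ℤ) - n + L - 1) / 2 < 0 by omega)]
  ring

lemma Fform_top {L : ℕ} {n : ℤ} (h : (L:ℤ) + 1 ≤ n) : Fform L n n = 0 := by
  unfold Fform
  rw [Qsum_full L (show (L:ℤ) ≤ ((L:ℤ) + n)/2 by omega),
      Qsum_neg (show ((L:ℤ) - n - 2) / 2 < 0 by omega)]
  have := Qsum_symm L (a := (n - n + (L:ℤ))/2) (b := (n - n + (L:ℤ) - 1)/2) (by omega)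
  linarith

lemma Qsum_pascal' (L : ℕ) (b c d : ℤ) (h1 : c = b) (h2 : d = b - 1) :
    Qsum (L+1) b = Qsum L c + Qsum L d := by
  rw [h1, h2]; exact Qsum_pascal L b

lemma Fform_rec (L : ℕ) (n j : ℤ) :
    Fform (L+1) n j = Fform L n (j+1) + Fform L n (j-1) := by
  unfold Fform
  push_cast
  have h1 : Qsum (L+1) (((L:ℤ) + 1 + j)/2)
      = Qsum L (((L:ℤ) + (j+1))/2) + Qsum L (((L:ℤ) + (j-1))/2) :=
    Qsum_pascal' L _ _ _ (by omega) (by omega)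
  have h2 : Qsum (L+1) ((j - n + ((L:ℤ) + 1))/2)
      = Qsum L ((j + 1 - n + (L:ℤ))/2) + Qsum L ((j - 1 - n + (L:ℤ))/2) :=
    Qsum_pascal' L _ _ _ (by omega) (by omega)
  have h3 : Qsum (L+1) ((j - n + ((L:ℤ) + 1) - 1)/2)
      = Qsum L ((j + 1 - n + (L:ℤ) - 1)/2) + Qsum L ((j - 1 - n + (L:ℤ) - 1)/2) :=
    Qsum_pascal' L _ _ _ (by omega) (by omega)
  have h4 : Qsum (L+1) (((L:ℤ) + 1 - j - 2)/2)
      = Qsum L (((L:ℤ) - (j-1) - 2)/2) + Qsum L (((L:ℤ) - (j+1) - 2)/2) :=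
    Qsum_pascal' L _ _ _ (by omega) (by omega)
  linarith [h1, h2, h3, h4]

abbrev HomSet (m n j : ℕ) := {f : Fin m → ℕ // IsPathHom m n f ∧ ∀ h : 0 < m, f ⟨0, h⟩ = j}

lemma fcongr {k : ℕ} (f : Fin k → ℕ) {a b : ℕ} {ha : a < k} {hb : b < k} (h : a = b) :
    f ⟨a, ha⟩ = f ⟨b, hb⟩ := by subst h; rfl

instance homFinite (m n j : ℕ) : Finite (HomSet m n j) := by
  apply Finite.of_injective (β := Fin m → Fin (n+1))
    (f := fun f => fun x => ⟨min (f.1 x) n, by omega⟩)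
  intro f g hfg
  apply Subtype.ext
  funext x
  have h1 := congrFun hfg x
  have hf := f.2.1.1 x
  have hg := g.2.1.1 x
  simp only [Fin.mk.injEq] at h1
  omega

lemma homCount_zero (m n j : ℕ) (hm : 0 < m) (hjn : n ≤ j) : Nat.card (HomSet m n j) = 0 := by
  have : IsEmpty (HomSet m n j) := by
    constructor
    rintro ⟨f, hf, h0⟩
    have := hf.1 ⟨0, hm⟩
    have := h0 hm
    omega
  exact Nat.card_of_isEmpty

lemma homCount_one (n j : ℕ) (hjn : j < n) : Nat.card (HomSet 1 n j) = 1 := by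
  have : Unique (HomSet 1 n j) := by
    refine ⟨⟨⟨fun _ => j, ⟨fun x => hjn, fun x h => absurd h (by omega)⟩, fun _ => rfl⟩⟩, ?_⟩
    rintro ⟨f, hf, h0⟩
    apply Subtype.ext
    funext x
    have hx : x = ⟨0, by omega⟩ := by
      apply Fin.ext; omega
    rw [hx]
    exact h0 (by omega)
  exact Nat.card_unique

section Rec

variable {m n j : ℕ}

def tl (f : Fin (m+1) → ℕ) : Fin m → ℕ := fun x => f ⟨x.1+1, by omega⟩

lemma tl_hom {f : Fin (m+1) → ℕ} (hf : IsPathHom (m+1) n f) : IsPathHom m n (tl f) := by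
  constructor
  · intro x; exact hf.1 _
  · intro x h
    have := hf.2 (x+1) (by omega)
    simpa [tl] using this

def ex (m j : ℕ) (g : Fin m → ℕ) : Fin (m+1) → ℕ := fun x =>
  if h : x.1 = 0 then j else g ⟨x.1 - 1, by omega⟩

lemma ex_hom (hm : 0 < m) (hjn : j < n) {g : Fin m → ℕ} (hg : IsPathHom m n g)
    (hadj : g ⟨0, hm⟩ = j + 1 ∨ j = g ⟨0, hm⟩ + 1) : IsPathHom (m+1) n (ex m j g) := by
  constructor
  · intro x
    by_cases h : x.1 = 0
    · simpa [ex, h] using hjn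
    · simpa [ex, h] using hg.1 _
  · intro x h
    rcases Nat.eq_zero_or_pos x with rfl | hx
    · simp only [ex]
      norm_num
      have e : g ⟨1 - 1, by omega⟩ = g ⟨0, hm⟩ := fcongr g (by omega)
      rw [e]
      exact hadj
    · obtain ⟨y, rfl⟩ : ∃ y, x = y + 1 := ⟨x - 1, by omega⟩
      have h2 := hg.2 y (by omega)
      simp only [ex]
      rw [dif_neg (by omega), dif_neg (by omega)]
      have e1 : g ⟨y + 1 + 1 - 1, by omega⟩ = g ⟨y + 1, by omega⟩ := fcongr g (by omega)
      have e2 : g ⟨y + 1 - 1, by omega⟩ = g ⟨y, by omega⟩ := fcongr g (by omega)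
      rw [e1, e2]
      exact h2
end Rec

section Equiv
variable {m n j : ℕ}

lemma f1_val {f : Fin (m+1) → ℕ} (hm : 0 < m) (hf : IsPathHom (m+1) n f)
    (h0 : f ⟨0, Nat.succ_pos m⟩ = j) :
    f ⟨1, by omega⟩ = j + 1 ∨ j = f ⟨1, by omega⟩ + 1 := by
  have hadj := hf.2 0 (by omega)
  rw [h0] at hadj
  exact hadj

lemma ex_tl {f : Fin (m+1) → ℕ} (h0 : f ⟨0, Nat.succ_pos m⟩ = j) :
    ex m j (tl f) = f := by
  funext x
  by_cases h : x.1 = 0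
  · rw [show x = ⟨0, Nat.succ_pos m⟩ from Fin.ext h]
    simp only [ex]
    rw [dif_pos trivial, h0]
  · simp only [ex, tl]
    rw [dif_neg h]
    exact fcongr f (by omega)

lemma tl_ex (g : Fin m → ℕ) : tl (ex m j g) = g := by
  funext x
  simp only [ex, tl]
  rw [dif_neg (by omega)]
  exact fcongr g (by omega)

lemma ex_one (g : Fin m → ℕ) (hm : 0 < m) : ex m j g ⟨1, by omega⟩ = g ⟨0, hm⟩ := by
  simp only [ex]
  rw [dif_neg (by omega)]

noncomputable def homEquiv (m n j : ℕ) (hm : 0 < m) (hj0 : 0 < j) (hjn : j < n) :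
    HomSet (m+1) n j ≃ HomSet m n (j+1) ⊕ HomSet m n (j-1) where
  toFun f :=
    if h : f.1 ⟨1, by omega⟩ = j + 1 then
      Sum.inl ⟨tl f.1, tl_hom f.2.1, fun _ => h⟩
    else
      Sum.inr ⟨tl f.1, tl_hom f.2.1, fun _ => by
        have d := (f1_val hm f.2.1 (f.2.2 (Nat.succ_pos m))).resolve_left h
        have key : ∀ a : ℕ, j = a + 1 → a = j - 1 := by omega
        exact key _ d⟩
  invFun s := Sum.elim
    (fun g => ⟨ex m j g.1,
      ex_hom hm hjn g.2.1 (Or.inl (g.2.2 hm)), fun _ => by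
        simp only [ex]; rw [dif_pos trivial]⟩)
    (fun g => ⟨ex m j g.1,
      ex_hom hm hjn g.2.1 (Or.inr (by rw [g.2.2 hm]; omega)), fun _ => by
        simp only [ex]; rw [dif_pos trivial]⟩) s
  left_inv f := by
    rcases f with ⟨f, hf, h0⟩
    by_cases h : f ⟨1, by omega⟩ = j + 1
    · simp only [dif_pos h, Sum.elim_inl]
      exact Subtype.ext (ex_tl (h0 (Nat.succ_pos m)))
    · simp only [dif_neg h, Sum.elim_inr]
      exact Subtype.ext (ex_tl (h0 (Nat.succ_pos m)))
  right_inv s := by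
    rcases s with g | g
    · simp only [Sum.elim_inl]
      have hcond : ex m j g.1 ⟨1, by omega⟩ = j + 1 := by
        rw [ex_one g.1 hm]; exact g.2.2 hm
      refine (dif_pos hcond).trans ?_
      exact congrArg Sum.inl (Subtype.ext (tl_ex (j := j) g.1))
    · simp only [Sum.elim_inr]
      have hcond : ¬ (ex m j g.1 ⟨1, by omega⟩ = j + 1) := by
        rw [ex_one g.1 hm, g.2.2 hm]; omega
      refine (dif_neg hcond).trans ?_
      exact congrArg Sum.inr (Subtype.ext (tl_ex (j := j) g.1))

lemma homCount_rec (m n j : ℕ) (hm : 0 < m) (hj0 : 0 < j) (hjn : j < n) :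
    Nat.card (HomSet (m+1) n j) =
      Nat.card (HomSet m n (j+1)) + Nat.card (HomSet m n (j-1)) := by
  rw [Nat.card_congr (homEquiv m n j hm hj0 hjn), Nat.card_sum]

end Equiv

noncomputable def homEquiv0 (m n : ℕ) (hm : 0 < m) (h0n : 0 < n) :
    HomSet (m+1) n 0 ≃ HomSet m n 1 where
  toFun f := ⟨tl f.1, tl_hom f.2.1, fun _ => by
    have d := f1_val hm f.2.1 (f.2.2 (Nat.succ_pos m))
    exact d.resolve_right (fun h => Nat.succ_ne_zero _ h.symm)⟩
  invFun g := ⟨ex m 0 g.1, ex_hom hm h0n g.2.1 (Or.inl (g.2.2 hm)), fun _ => by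
    simp only [ex]; rw [dif_pos trivial]⟩
  left_inv f := Subtype.ext (ex_tl (f.2.2 (Nat.succ_pos m)))
  right_inv g := Subtype.ext (tl_ex (j := 0) g.1)

lemma main_count (n : ℕ) : ∀ m, 0 < m → m ≤ n → ∀ j : ℕ, j < n →
    (Nat.card (HomSet m n j) : ℤ) = Fform (m-1) n j := by
  intro m
  induction m with
  | zero => omega
  | succ k ih =>
    intro _ hmn j hj
    rcases Nat.eq_zero_or_pos k with rfl | hk
    · rw [homCount_one n j hj, Fform_base (by positivity) (by exact_mod_cast hj)]
      norm_num
    · have hkn : k ≤ n := by omega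
      have hk1 : k - 1 + 1 = k := by omega
      have hFrec : ∀ i : ℤ, Fform k n i = Fform (k-1) n (i+1) + Fform (k-1) n (i-1) := by
        intro i
        have := Fform_rec (k-1) n i
        rwa [hk1] at this
      have hL : ((k:ℤ) - 1) = ((k-1 : ℕ) : ℤ) := by omega
      rcases Nat.eq_zero_or_pos j with rfl | hj0
      · rw [Nat.card_congr (homEquiv0 k n hk (by omega))]
        rw [ih hk hkn 1 (by omega)]
        rw [show (k+1-1 : ℕ) = k from rfl]
        push_cast
        rw [hFrec 0]
        norm_num [Fform_neg_one (show ((k-1:ℕ):ℤ) ≤ (n:ℤ) by rw [← hL]; omega)]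
      · have hrec := homCount_rec k n j hk hj0 hj
        rw [show (k+1-1 : ℕ) = k from rfl, hrec]
        rcases lt_or_eq_of_le (Nat.succ_le_of_lt hj) with hj1 | hj1
        · push_cast
          rw [ih hk hkn (j+1) hj1, ih hk hkn (j-1) (by omega)]
          rw [hFrec (j:ℤ), Nat.cast_pred hj0]
          push_cast
          try ring
        · rw [homCount_zero k n (j+1) hk (by omega)]
          push_cast
          rw [ih hk hkn (j-1) (by omega)]
          rw [hFrec (j:ℤ), Nat.cast_pred hj0]
          have htop : Fform (k-1) n ((j:ℤ)+1) = 0 := by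
            have he : ((j:ℤ)+1) = (n:ℤ) := by exact_mod_cast congrArg (Nat.cast : ℕ → ℤ) hj1
            rw [he]
            exact Fform_top (by rw [← hL]; omega)
          rw [htop]
          try ring


lemma floor2 (a : ℤ) : ⌊(a:ℚ)/2⌋ = a / 2 := by
  have h := Rat.floor_intCast_div_natCast a 2
  norm_num at h
  exact h

lemma ceil2 (a : ℤ) : ⌈(a:ℚ)/2⌉ = (a+1) / 2 := by
  have h0 : ⌈(a:ℚ)/2⌉ = -⌊-((a:ℚ)/2)⌋ := by rw [Int.floor_neg]; ring
  have h : -((a:ℚ)/2) = ((-a : ℤ):ℚ)/2 := by push_cast; ring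
  rw [h0, h, floor2]
  omega

lemma Qsum_Icc_max (L : ℕ) (a b : ℤ) (hab : a - 1 ≤ b) :
    ∑ t ∈ Finset.Icc (max 0 a) b, (chooseZ L t : ℤ) = Qsum L b - Qsum L (a-1) := by
  rcases le_or_gt a 0 with h | h
  · rw [max_eq_left h, Qsum_neg (show a - 1 < 0 by omega)]
    simp [Qsum]
  · rw [max_eq_right (le_of_lt h)]
    have hsub : Finset.Icc (0:ℤ) (a-1) ⊆ Finset.Icc 0 b := Finset.Icc_subset_Icc_right (by omega)
    have hs := Finset.sum_sdiff_eq_sub (f := fun t => (chooseZ L t : ℤ)) hsub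
    rw [show Finset.Icc (0:ℤ) b \ Finset.Icc 0 (a-1) = Finset.Icc a b by
      ext t; simp only [Finset.mem_Icc, Finset.mem_sdiff]; omega] at hs
    exact hs

lemma Fform_eq (L : ℕ) (n j b1 b2 b3 b4 : ℤ)
    (h1 : b1 = ((L:ℤ)+j)/2) (h2 : b2 = (j-n+L)/2) (h3 : b3 = (j-n+L-1)/2)
    (h4 : b4 = ((L:ℤ)-j-2)/2) :
    (Qsum L b1 - Qsum L b2) - Qsum L b3 - Qsum L b4 = Fform L n j := by
  subst h1; subst h2; subst h3; subst h4
  unfold Fform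
  ring

/-- for `m ≤ n` and `j < n`,
`|Hom^j(P_m, P_n)| = Σ_{t=max{0,⌈(j−(n−m))/2⌉}}^{⌈(m+j)/2⌉−1} C(m−1, t)
  − Σ_{t=0}^{⌊(j−(n−m))/2⌋−1} C(m−1, t) − Σ_{t=0}^{⌊(m−j−1)/2⌋−1} C(m−1, t)`. -/
theorem homCount_formula_reduced (m n j : ℕ) (hm : 0 < m) (hn : 0 < n)
    (hmn : m ≤ n) (hj : j < n) :
    (homCount m n j : ℤ) =
      (∑ t ∈ Finset.Icc (max 0 ⌈((j : ℚ) - ((n : ℚ) - m)) / 2⌉) (⌈((m : ℚ) + j) / 2⌉ - 1),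
        (chooseZ (m - 1) t : ℤ)) -
      (∑ t ∈ Finset.Icc 0 (⌊((j : ℚ) - ((n : ℚ) - m)) / 2⌋ - 1), (chooseZ (m - 1) t : ℤ)) -
      (∑ t ∈ Finset.Icc 0 (⌊((m : ℚ) - j - 1) / 2⌋ - 1), (chooseZ (m - 1) t : ℤ)) := by
  have hc : (homCount m n j : ℤ) = (Nat.card (HomSet m n j) : ℤ) := rfl
  have e1 : ((j : ℚ) - ((n : ℚ) - m)) / 2 = (((j : ℤ) - n + m : ℤ) : ℚ) / 2 := by
    push_cast; ring
  have e2 : ((m : ℚ) + j) / 2 = (((m : ℤ) + j : ℤ) : ℚ) / 2 := by push_cast; ring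
  have e3 : ((m : ℚ) - j - 1) / 2 = (((m : ℤ) - j - 1 : ℤ) : ℚ) / 2 := by push_cast; ring
  rw [hc, main_count n m hm hmn j hj, e1, e2, e3, ceil2, ceil2, floor2, floor2]
  rw [Qsum_Icc_max (m-1) _ _ (by omega)]
  rw [show (∑ t ∈ Finset.Icc (0:ℤ) (((j:ℤ) - n + m)/2 - 1), (chooseZ (m-1) t : ℤ))
        = Qsum (m-1) (((j:ℤ) - n + m)/2 - 1) from rfl,
      show (∑ t ∈ Finset.Icc (0:ℤ) (((m:ℤ) - j - 1)/2 - 1), (chooseZ (m-1) t : ℤ))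
        = Qsum (m-1) (((m:ℤ) - j - 1)/2 - 1) from rfl]
  refine (Fform_eq (m-1) n j _ _ _ _ ?_ ?_ ?_ ?_).symm <;>
    · have hL : ((m-1 : ℕ) : ℤ) = (m:ℤ) - 1 := by omega
      rw [hL]
      omega
end

section
/- Let m > 2 and n, k be positive integers. Then |WHom(P_m, P_{2n} □ P_{2k})| = 4 · Σ_{i=0}^{n−1} Σ_{j=0}^{k−1} |WHom^{ij}(P_m, P_{2n} □ P_{2k})|. -/
/-- Adjacency of vertices in a path graph on `{0, 1, 2, …}`: `a` and `b` differ by 1. -/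
def natAdj (a b : ℕ) : Prop := a = b + 1 ∨ b = a + 1

/-- `f : Fin m → ℕ × ℕ` is a weak homomorphism from the path `P_m` to the rectangular
grid graph `P_n □ P_k` (the Cartesian product of the paths `P_n` and `P_k`):
every vertex lands in `{0,…,n−1} × {0,…,k−1}`, and consecutive vertices are mapped to
equal or adjacent vertices of the grid. -/
def IsGridWHom (m n k : ℕ) (f : Fin m → ℕ × ℕ) : Prop :=
  (∀ x, (f x).1 < n ∧ (f x).2 < k) ∧
  ∀ (x : ℕ) (h : x + 1 < m),
    f ⟨x + 1, h⟩ = f ⟨x, Nat.lt_of_succ_lt h⟩ ∨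
    (natAdj (f ⟨x + 1, h⟩).1 (f ⟨x, Nat.lt_of_succ_lt h⟩).1 ∧
      (f ⟨x + 1, h⟩).2 = (f ⟨x, Nat.lt_of_succ_lt h⟩).2) ∨
    ((f ⟨x + 1, h⟩).1 = (f ⟨x, Nat.lt_of_succ_lt h⟩).1 ∧
      natAdj (f ⟨x + 1, h⟩).2 (f ⟨x, Nat.lt_of_succ_lt h⟩).2)

/-- `|WHom^{ij}(P_m, P_n □ P_k)|`: the number of weak homomorphisms from `P_m` to
`P_n □ P_k` sending `0` to `(i, j)`. -/
noncomputable def gridWHomCountAt (m n k i j : ℕ) : ℕ :=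
  Nat.card {f : Fin m → ℕ × ℕ // IsGridWHom m n k f ∧ ∀ h : 0 < m, f ⟨0, h⟩ = (i, j)}

/-- `|WHom(P_m, P_n □ P_k)|`: the number of weak homomorphisms from `P_m` to `P_n □ P_k`. -/
noncomputable def gridWHomCount (m n k : ℕ) : ℕ :=
  Nat.card {f : Fin m → ℕ × ℕ // IsGridWHom m n k f}

lemma gridWHom_finite (m N K : ℕ) :
    Finite {f : Fin m → ℕ × ℕ // IsGridWHom m N K f} := by
  apply Finite.of_injective
    (fun fh : {f : Fin m → ℕ × ℕ // IsGridWHom m N K f} =>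
      (fun x => ((⟨(fh.1 x).1, Nat.lt_succ_of_lt (fh.2.1 x).1⟩ : Fin (N+1)),
                 (⟨(fh.1 x).2, Nat.lt_succ_of_lt (fh.2.1 x).2⟩ : Fin (K+1)))))
  intro f g h
  apply Subtype.ext
  funext x
  have := congrFun h x
  simp only [Prod.mk.injEq, Fin.mk.injEq] at this
  exact Prod.ext this.1 this.2

lemma gridWHomAt_finite (m N K i j : ℕ) :
    Finite {f : Fin m → ℕ × ℕ // IsGridWHom m N K f ∧ ∀ h : 0 < m, f ⟨0, h⟩ = (i, j)} := by
  have := gridWHom_finite m N K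
  apply Finite.of_injective
    (fun fh : {f : Fin m → ℕ × ℕ // IsGridWHom m N K f ∧ ∀ h : 0 < m, f ⟨0, h⟩ = (i, j)} =>
      (⟨fh.1, fh.2.1⟩ : {f : Fin m → ℕ × ℕ // IsGridWHom m N K f}))
  intro f g h
  simp only [Subtype.mk.injEq] at h
  exact Subtype.ext h

/-- Reflection in the first coordinate. -/
def refl1 (N : ℕ) (f : Fin m → ℕ × ℕ) : Fin m → ℕ × ℕ :=
  fun x => (N - 1 - (f x).1, (f x).2)

lemma refl1_whom {m N K : ℕ} (hN : 0 < N) {f : Fin m → ℕ × ℕ}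
    (hf : IsGridWHom m N K f) : IsGridWHom m N K (refl1 N f) := by
  obtain ⟨hb, ha⟩ := hf
  refine ⟨fun x => ⟨by have := (hb x).1; simp [refl1]; omega, (hb x).2⟩, ?_⟩
  intro x h
  have h1 := (hb ⟨x + 1, h⟩).1
  have h2 := (hb ⟨x, Nat.lt_of_succ_lt h⟩).1
  rcases ha x h with h' | ⟨h', h''⟩ | ⟨h', h''⟩
  · left; simp [refl1, h']
  · right; left
    refine ⟨?_, by simp [refl1, h'']⟩
    simp only [refl1, natAdj] at h' ⊢; omega
  · right; right
    refine ⟨by simp [refl1, h'], by simpa [refl1, natAdj] using h''⟩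

lemma refl1_refl1 {m N K : ℕ} {f : Fin m → ℕ × ℕ} (hf : IsGridWHom m N K f) :
    refl1 N (refl1 N f) = f := by
  funext x
  have := (hf.1 x).1
  simp only [refl1]
  exact Prod.ext (by omega) rfl

def refl2 (K : ℕ) (f : Fin m → ℕ × ℕ) : Fin m → ℕ × ℕ :=
  fun x => ((f x).1, K - 1 - (f x).2)

lemma refl2_whom {m N K : ℕ} (hK : 0 < K) {f : Fin m → ℕ × ℕ}
    (hf : IsGridWHom m N K f) : IsGridWHom m N K (refl2 K f) := by
  obtain ⟨hb, ha⟩ := hf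
  refine ⟨fun x => ⟨(hb x).1, by have := (hb x).2; simp [refl2]; omega⟩, ?_⟩
  intro x h
  have h1 := (hb ⟨x + 1, h⟩).2
  have h2 := (hb ⟨x, Nat.lt_of_succ_lt h⟩).2
  rcases ha x h with h' | ⟨h', h''⟩ | ⟨h', h''⟩
  · left; simp [refl2, h']
  · right; left
    refine ⟨by simpa [refl2, natAdj] using h', by simp [refl2, h'']⟩
  · right; right
    refine ⟨by simp [refl2, h'], ?_⟩
    simp only [refl2, natAdj] at h'' ⊢; omega

lemma refl2_refl2 {m N K : ℕ} {f : Fin m → ℕ × ℕ} (hf : IsGridWHom m N K f) :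
    refl2 K (refl2 K f) = f := by
  funext x
  have := (hf.1 x).2
  simp only [refl2]
  exact Prod.ext rfl (by omega)

lemma countAt_refl1 (m N K i j : ℕ) (hi : i < N) :
    gridWHomCountAt m N K i j = gridWHomCountAt m N K (N - 1 - i) j := by
  have hN : 0 < N := lt_of_le_of_lt (Nat.zero_le i) hi
  apply Nat.card_congr
  refine ⟨fun fh => ⟨refl1 N fh.1, refl1_whom hN fh.2.1, ?_⟩,
          fun fh => ⟨refl1 N fh.1, refl1_whom hN fh.2.1, ?_⟩, ?_, ?_⟩
  · intro h
    simp [refl1, fh.2.2 h]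
  · intro h
    have h0 := fh.2.2 h
    have hb := (fh.2.1.1 ⟨0, h⟩).1
    simp only [refl1, h0]
    exact Prod.ext (by simp; omega) rfl
  · intro fh
    exact Subtype.ext (refl1_refl1 fh.2.1)
  · intro fh
    exact Subtype.ext (refl1_refl1 fh.2.1)

lemma countAt_refl2 (m N K i j : ℕ) (hj : j < K) :
    gridWHomCountAt m N K i j = gridWHomCountAt m N K i (K - 1 - j) := by
  have hK : 0 < K := lt_of_le_of_lt (Nat.zero_le j) hj
  apply Nat.card_congr
  refine ⟨fun fh => ⟨refl2 K fh.1, refl2_whom hK fh.2.1, ?_⟩,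
          fun fh => ⟨refl2 K fh.1, refl2_whom hK fh.2.1, ?_⟩, ?_, ?_⟩
  · intro h
    simp [refl2, fh.2.2 h]
  · intro h
    have h0 := fh.2.2 h
    have hb := (fh.2.1.1 ⟨0, h⟩).2
    simp only [refl2, h0]
    exact Prod.ext rfl (by simp; omega)
  · intro fh
    exact Subtype.ext (refl2_refl2 fh.2.1)
  · intro fh
    exact Subtype.ext (refl2_refl2 fh.2.1)

lemma count_eq_sum (m N K : ℕ) (hm : 0 < m) :
    gridWHomCount m N K =
      ∑ i ∈ Finset.range N, ∑ j ∈ Finset.range K, gridWHomCountAt m N K i j := by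
  classical
  have hfin := gridWHom_finite m N K
  have e : {f : Fin m → ℕ × ℕ // IsGridWHom m N K f} ≃
      Σ p : Fin N × Fin K, {f : Fin m → ℕ × ℕ //
        IsGridWHom m N K f ∧ ∀ h : 0 < m, f ⟨0, h⟩ = (p.1.1, p.2.1)} := by
    refine ⟨fun fh => ⟨((⟨(fh.1 ⟨0, hm⟩).1, (fh.2.1 ⟨0, hm⟩).1⟩ : Fin N),
                        (⟨(fh.1 ⟨0, hm⟩).2, (fh.2.1 ⟨0, hm⟩).2⟩ : Fin K)),
                       ⟨fh.1, fh.2, fun _ => rfl⟩⟩,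
            fun s => ⟨s.2.1, s.2.2.1⟩, fun fh => rfl, ?_⟩
    rintro ⟨⟨⟨pi, hpi⟩, ⟨pj, hpj⟩⟩, ⟨f, hf, h0⟩⟩
    have h0' := h0 hm
    have e1 : (f ⟨0, hm⟩).1 = pi := by rw [h0']
    have e2 : (f ⟨0, hm⟩).2 = pj := by rw [h0']
    subst e1
    subst e2
    rfl
  have hfib : ∀ p : Fin N × Fin K, Fintype {f : Fin m → ℕ × ℕ //
      IsGridWHom m N K f ∧ ∀ h : 0 < m, f ⟨0, h⟩ = (p.1.1, p.2.1)} :=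
    fun p => @Fintype.ofFinite _ (gridWHomAt_finite m N K p.1.1 p.2.1)
  have := Fintype.ofFinite {f : Fin m → ℕ × ℕ // IsGridWHom m N K f}
  letI := hfib
  rw [gridWHomCount, Nat.card_eq_fintype_card, Fintype.card_congr e,
    Fintype.card_sigma]
  rw [Fintype.sum_prod_type]
  rw [Finset.sum_range fun i => ∑ j ∈ Finset.range K, gridWHomCountAt m N K i j]
  refine Finset.sum_congr rfl fun i _ => ?_
  rw [Finset.sum_range fun j => gridWHomCountAt m N K i j]
  refine Finset.sum_congr rfl fun j _ => ?_
  rw [gridWHomCountAt, @Nat.card_eq_fintype_card _ (hfib (i, j))]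

lemma sum_reflect_double (N : ℕ) (g : ℕ → ℕ)
    (hsym : ∀ i < 2 * N, g i = g (2 * N - 1 - i)) :
    ∑ i ∈ Finset.range (2 * N), g i = 2 * ∑ i ∈ Finset.range N, g i := by
  have h2 : 2 * N = N + N := by ring
  rw [h2, Finset.sum_range_add]
  have : ∑ i ∈ Finset.range N, g (N + i) = ∑ i ∈ Finset.range N, g i := by
    rw [← Finset.sum_range_reflect (fun i => g (N + i)) N]
    refine Finset.sum_congr rfl fun i hi => ?_
    rw [Finset.mem_range] at hi
    have e1 : N + (N - 1 - i) = 2 * N - 1 - i := by omega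
    rw [e1, ← hsym i (by omega)]
  rw [this]
  ring

/-- `|WHom(P_m, P_{2n} □ P_{2k})|
  = 4 Σ_{i=0}^{n−1} Σ_{j=0}^{k−1} |WHom^{ij}(P_m, P_{2n} □ P_{2k})|`. -/
theorem gridWHomCount_even_even (m n k : ℕ) (hm : 2 < m) (hn : 0 < n) (hk : 0 < k) :
    gridWHomCount m (2 * n) (2 * k) =
      4 * ∑ i ∈ Finset.range n, ∑ j ∈ Finset.range k,
        gridWHomCountAt m (2 * n) (2 * k) i j := by
  rw [count_eq_sum m (2 * n) (2 * k) (by omega)]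
  rw [sum_reflect_double n (fun i => ∑ j ∈ Finset.range (2 * k),
        gridWHomCountAt m (2 * n) (2 * k) i j)
      (fun i hi => Finset.sum_congr rfl fun j _ =>
        countAt_refl1 m (2 * n) (2 * k) i j hi)]
  have : ∀ i, ∑ j ∈ Finset.range (2 * k), gridWHomCountAt m (2 * n) (2 * k) i j
      = 2 * ∑ j ∈ Finset.range k, gridWHomCountAt m (2 * n) (2 * k) i j :=
    fun i => sum_reflect_double k _ (fun j hj => countAt_refl2 m (2 * n) (2 * k) i j hj)
  simp only [this]
  rw [← Finset.mul_sum]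
  ring
end

section
/- Let m, n, k be positive integers and let i, j be non-negative integers with i < n/2 − 1 and j < k/2 − 1. Then the number of weak homomorphisms f from P_m to the rectangular grid graph P_n □ P_k with f(0) = (i, j) satisfies |WHom^{ij}(P_m, P_n □ P_k)| = Σ_{h=0}^{m−1} C(m−1, h) · |Hom^i(P_{h+1}, P_n)| · |WHom^j(P_{m−h}, P_k)|, where C(m−1, h) is a binomial coefficient. -/
/-- `f : Fin m → ℕ` is a weak homomorphism from the path `P_m` to the path `P_n`. -/
def IsPathWHom (m n : ℕ) (f : Fin m → ℕ) : Prop :=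
  (∀ x, f x < n) ∧
  ∀ (x : ℕ) (h : x + 1 < m),
    f ⟨x + 1, h⟩ = f ⟨x, Nat.lt_of_succ_lt h⟩ ∨
    f ⟨x + 1, h⟩ = f ⟨x, Nat.lt_of_succ_lt h⟩ + 1 ∨
    f ⟨x, Nat.lt_of_succ_lt h⟩ = f ⟨x + 1, h⟩ + 1

/-- `|WHom^j(P_m, P_n)|`: the number of weak homomorphisms `f : P_m → P_n` with `f(0) = j`. -/
noncomputable def whomCount (m n j : ℕ) : ℕ :=
  Nat.card {f : Fin m → ℕ // IsPathWHom m n f ∧ ∀ h : 0 < m, f ⟨0, h⟩ = j}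

namespace GridAux
open Finset

def cnt (N : Finset ℕ) (t : ℕ) : ℕ := (N.filter (· < t)).card

lemma cnt_zero (N : Finset ℕ) : cnt N 0 = 0 := by simp [cnt]

lemma cnt_succ (N : Finset ℕ) (t : ℕ) :
    cnt N (t + 1) = cnt N t + (if t ∈ N then 1 else 0) := by
  classical
  unfold cnt
  have h1 : N.filter (· < t + 1) = N.filter (· < t) ∪ N.filter (· = t) := by
    ext x
    simp only [mem_filter, mem_union]
    constructor
    · rintro ⟨hx, hlt⟩
      rcases Nat.lt_succ_iff_lt_or_eq.1 hlt with h | h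
      · exact Or.inl ⟨hx, h⟩
      · exact Or.inr ⟨hx, h⟩
    · rintro (⟨hx, h⟩ | ⟨hx, rfl⟩)
      · exact ⟨hx, h.trans (Nat.lt_succ_self t)⟩
      · exact ⟨hx, Nat.lt_succ_self x⟩
  rw [h1, card_union_of_disjoint]
  · congr 1
    rw [Finset.filter_eq']
    split_ifs <;> simp
  · rw [Finset.disjoint_left]
    intro x hx hx'
    simp only [mem_filter] at hx hx'
    omega

lemma cnt_mono (N : Finset ℕ) : Monotone (cnt N) := by
  apply monotone_nat_of_le_succ
  intro t
  rw [cnt_succ]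
  split_ifs <;> omega

lemma cnt_le (N : Finset ℕ) (t : ℕ) : cnt N t ≤ t := by
  have h : N.filter (· < t) ⊆ Finset.range t := by
    intro x hx
    simp only [mem_filter] at hx
    exact mem_range.2 hx.2
  exact (Finset.card_le_card h).trans_eq (Finset.card_range t)

lemma bcnt_mono (N : Finset ℕ) : Monotone (fun t => t - cnt N t) := by
  apply monotone_nat_of_le_succ
  intro t
  have h1 := cnt_succ N t
  have h2 := cnt_le N t
  show t - cnt N t ≤ (t + 1) - cnt N (t + 1)
  split_ifs at h1 <;> omega

lemma cnt_eq_card {N : Finset ℕ} {M : ℕ} (hN : N ⊆ Finset.range M) {t : ℕ} (ht : M ≤ t) :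
    cnt N t = N.card := by
  unfold cnt
  rw [Finset.filter_true_of_mem]
  intro x hx
  exact lt_of_lt_of_le (mem_range.1 (hN hx)) ht

lemma card_le_of_subset_range {N : Finset ℕ} {M : ℕ} (hN : N ⊆ Finset.range M) :
    N.card ≤ M := by
  have := Finset.card_le_card hN
  simpa using this

lemma cnt_lt_card {N : Finset ℕ} {t : ℕ} (ht : t ∈ N) : cnt N t < N.card := by
  have hsub : N.filter (· < t) ⊆ N.erase t := by
    intro x hx
    simp only [mem_filter] at hx
    exact Finset.mem_erase.2 ⟨by omega, hx.1⟩
  calc cnt N t ≤ (N.erase t).card := card_le_card hsub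
    _ < N.card := card_erase_lt_of_mem ht

lemma exists_eq_of_step (F : ℕ → ℕ) (h0 : F 0 = 0) (hs : ∀ t, F (t + 1) ≤ F t + 1)
    {T s : ℕ} (hsT : s ≤ F T) : ∃ t, t ≤ T ∧ F t = s := by
  induction T with
  | zero => exact ⟨0, le_rfl, by omega⟩
  | succ T ih =>
    by_cases h : s ≤ F T
    · obtain ⟨t, ht, hft⟩ := ih h
      exact ⟨t, by omega, hft⟩
    · exact ⟨T + 1, le_rfl, by have := hs T; omega⟩

lemma exists_cnt_eq {N : Finset ℕ} {M : ℕ} (hN : N ⊆ Finset.range M) {s : ℕ}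
    (hs : s ≤ N.card) : ∃ t, t ≤ M ∧ cnt N t = s := by
  refine exists_eq_of_step (cnt N) (cnt_zero N) (fun t => by rw [cnt_succ]; split_ifs <;> omega) ?_
  rw [cnt_eq_card hN le_rfl]
  exact hs

lemma exists_bcnt_eq {N : Finset ℕ} {M : ℕ} (hN : N ⊆ Finset.range M) {s : ℕ}
    (hs : s ≤ M - N.card) : ∃ t, t ≤ M ∧ t - cnt N t = s := by
  refine exists_eq_of_step (fun t => t - cnt N t) (by simp) ?_ ?_
  · intro t
    have h1 := cnt_succ N t
    have h2 := cnt_le N t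
    show (t + 1) - cnt N (t + 1) ≤ (t - cnt N t) + 1
    split_ifs at h1 <;> omega
  · simpa only [cnt_eq_card hN le_rfl] using hs

lemma fin_congr {L : ℕ} (g : Fin L → ℕ) {a b : ℕ} (pa : a < L) (pb : b < L) (h : a = b) :
    g ⟨a, pa⟩ = g ⟨b, pb⟩ := by subst h; rfl

lemma const_aux (G : ℕ → ℕ) (M : ℕ) (cntf : ℕ → ℕ) (hmono : Monotone cntf)
    (hstep : ∀ t, t < M → cntf (t + 1) = cntf t → G (t + 1) = G t) :
    ∀ t t', t ≤ t' → t' ≤ M → cntf t = cntf t' → G t = G t' := by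
  intro t t' h
  induction t', h using Nat.le_induction with
  | base => intro _ _; rfl
  | succ t' ht' ih =>
    intro hM hc
    have h1 : cntf t ≤ cntf t' := hmono ht'
    have h2 : cntf t' ≤ cntf (t' + 1) := hmono (Nat.le_succ t')
    have e1 : cntf t = cntf t' := by omega
    have e2 : cntf (t' + 1) = cntf t' := by omega
    rw [hstep t' (by omega) e2, ih (by omega) e1]

lemma const_aux' (G : ℕ → ℕ) (M : ℕ) (cntf : ℕ → ℕ) (hmono : Monotone cntf)
    (hstep : ∀ t, t < M → cntf (t + 1) = cntf t → G (t + 1) = G t) :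
    ∀ t t', t ≤ M → t' ≤ M → cntf t = cntf t' → G t = G t' := by
  intro t t' h h' hc
  rcases le_total t t' with hle | hle
  · exact const_aux G M cntf hmono hstep t t' hle h' hc
  · exact (const_aux G M cntf hmono hstep t' t hle h hc.symm).symm


def phi (M : ℕ) (N : Finset ℕ) (hN : N ⊆ Finset.range M)
    (g : Fin (N.card + 1) → ℕ) (w : Fin (M + 1 - N.card) → ℕ) : Fin (M + 1) → ℕ × ℕ :=
  fun t =>
    (g ⟨cnt N t.1, by
        have h1 : cnt N t.1 ≤ cnt N M := cnt_mono N (Nat.lt_succ_iff.1 t.2)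
        have h2 := cnt_eq_card hN (le_refl M)
        omega⟩,
     w ⟨t.1 - cnt N t.1, by
        have h1 : t.1 - cnt N t.1 ≤ M - cnt N M := bcnt_mono N (Nat.lt_succ_iff.1 t.2)
        have h2 := cnt_eq_card hN (le_refl M)
        have h3 : N.card ≤ M := card_le_of_subset_range hN
        omega⟩)

section phiLemmas

variable {M n k : ℕ} {N : Finset ℕ} (hN : N ⊆ Finset.range M)
  (g : Fin (N.card + 1) → ℕ) (w : Fin (M + 1 - N.card) → ℕ)

lemma phi_fst (t : Fin (M + 1)) (p : cnt N t.1 < N.card + 1) :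
    (phi M N hN g w t).1 = g ⟨cnt N t.1, p⟩ := rfl

lemma phi_snd (t : Fin (M + 1)) (p : t.1 - cnt N t.1 < M + 1 - N.card) :
    (phi M N hN g w t).2 = w ⟨t.1 - cnt N t.1, p⟩ := rfl

lemma phi_isGridWHom (hg : IsPathHom (N.card + 1) n g) (hw : IsPathWHom (M + 1 - N.card) k w) :
    IsGridWHom (M + 1) n k (phi M N hN g w) := by
  have hcard : N.card ≤ M := card_le_of_subset_range hN
  constructor
  · intro x
    exact ⟨hg.1 _, hw.1 _⟩
  · intro x h
    have hxM : x < M := by omega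
    have hble := cnt_le N x
    have hcx : cnt N x < N.card + 1 := by
      have h1 : cnt N x ≤ cnt N M := cnt_mono N (le_of_lt hxM)
      have h2 := cnt_eq_card hN (le_refl M)
      omega
    have hbx1 : (x + 1) - cnt N (x + 1) ≤ M - N.card := by
      have h1 : (x + 1) - cnt N (x + 1) ≤ M - cnt N M := bcnt_mono N (by omega : x + 1 ≤ M)
      have h2 := cnt_eq_card hN (le_refl M)
      omega
    by_cases hmem : x ∈ N
    · have hlt : cnt N x < N.card := cnt_lt_card hmem
      have hc : cnt N (x + 1) = cnt N x + 1 := by rw [cnt_succ]; simp [hmem]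
      have e1 : phi M N hN g w ⟨x + 1, h⟩ =
          (g ⟨cnt N x + 1, by omega⟩, w ⟨x - cnt N x, by omega⟩) := by
        refine Prod.ext ?_ ?_
        · exact fin_congr g _ _ hc
        · exact fin_congr w _ _ (show (x + 1) - cnt N (x + 1) = x - cnt N x by omega)
      have e2 : phi M N hN g w ⟨x, Nat.lt_of_succ_lt h⟩ =
          (g ⟨cnt N x, by omega⟩, w ⟨x - cnt N x, by omega⟩) := by
        refine Prod.ext ?_ ?_
        · exact fin_congr g _ _ rfl
        · exact fin_congr w _ _ rfl
      rw [e1, e2]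
      right; left
      exact ⟨hg.2 (cnt N x) (by omega), rfl⟩
    · have hc : cnt N (x + 1) = cnt N x := by rw [cnt_succ]; simp [hmem]
      have hbw : (x - cnt N x) + 1 < M + 1 - N.card := by omega
      have e1 : phi M N hN g w ⟨x + 1, h⟩ =
          (g ⟨cnt N x, by omega⟩, w ⟨(x - cnt N x) + 1, hbw⟩) := by
        refine Prod.ext ?_ ?_
        · exact fin_congr g _ _ hc
        · exact fin_congr w _ _ (show (x + 1) - cnt N (x + 1) = (x - cnt N x) + 1 by omega)
      have e2 : phi M N hN g w ⟨x, Nat.lt_of_succ_lt h⟩ =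
          (g ⟨cnt N x, by omega⟩, w ⟨x - cnt N x, by omega⟩) := by
        refine Prod.ext ?_ ?_
        · exact fin_congr g _ _ rfl
        · exact fin_congr w _ _ rfl
      rw [e1, e2]
      rcases hw.2 (x - cnt N x) hbw with h1 | h1 | h1
      · left
        exact Prod.ext rfl h1
      · right; right
        exact ⟨rfl, Or.inl h1⟩
      · right; right
        exact ⟨rfl, Or.inr h1⟩

lemma phi_zero (p0 : (0 : ℕ) < M + 1) (pg : 0 < N.card + 1) (pw : 0 < M + 1 - N.card) :
    phi M N hN g w ⟨0, p0⟩ = (g ⟨0, pg⟩, w ⟨0, pw⟩) := by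
  refine Prod.ext ?_ ?_
  · exact fin_congr g _ _ (cnt_zero N)
  · exact fin_congr w _ _ (show 0 - cnt N 0 = 0 by rw [cnt_zero])

end phiLemmas

section inj

variable {M n k : ℕ}

lemma phi_move_iff {N : Finset ℕ} (hN : N ⊆ Finset.range M)
    (g : Fin (N.card + 1) → ℕ) (w : Fin (M + 1 - N.card) → ℕ)
    (hg : IsPathHom (N.card + 1) n g) {t : ℕ} (ht : t < M)
    (p1 : t + 1 < M + 1) (p2 : t < M + 1) :
    t ∈ N ↔ (phi M N hN g w ⟨t + 1, p1⟩).1 ≠ (phi M N hN g w ⟨t, p2⟩).1 := by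
  have hcard : N.card ≤ M := card_le_of_subset_range hN
  have hcx : cnt N t ≤ N.card :=
    le_trans (cnt_mono N (le_of_lt ht)) (le_of_eq (cnt_eq_card hN le_rfl))
  constructor
  · intro hmem
    have hlt : cnt N t < N.card := cnt_lt_card hmem
    have hc : cnt N (t + 1) = cnt N t + 1 := by rw [cnt_succ]; simp [hmem]
    have hstep : g ⟨cnt N t + 1, by omega⟩ = g ⟨cnt N t, by omega⟩ + 1 ∨
        g ⟨cnt N t, by omega⟩ = g ⟨cnt N t + 1, by omega⟩ + 1 := hg.2 (cnt N t) (by omega)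
    have hA : (phi M N hN g w ⟨t + 1, p1⟩).1 = g ⟨cnt N t + 1, by omega⟩ := by
      rw [phi_fst hN g w ⟨t + 1, p1⟩ (show cnt N (t + 1) < N.card + 1 by omega)]
      exact fin_congr g _ _ hc
    have hB : (phi M N hN g w ⟨t, p2⟩).1 = g ⟨cnt N t, by omega⟩ :=
      phi_fst hN g w ⟨t, p2⟩ (show cnt N t < N.card + 1 by omega)
    rw [hA, hB]
    rcases hstep with h | h <;> omega
  · intro hne
    by_contra hmem
    have hc : cnt N (t + 1) = cnt N t := by rw [cnt_succ]; simp [hmem]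
    have hA : (phi M N hN g w ⟨t + 1, p1⟩).1 = g ⟨cnt N t, by omega⟩ := by
      rw [phi_fst hN g w ⟨t + 1, p1⟩ (show cnt N (t + 1) < N.card + 1 by omega)]
      exact fin_congr g _ _ hc
    have hB : (phi M N hN g w ⟨t, p2⟩).1 = g ⟨cnt N t, by omega⟩ :=
      phi_fst hN g w ⟨t, p2⟩ (show cnt N t < N.card + 1 by omega)
    exact hne (hA.trans hB.symm)

lemma phi_inj_N {N N' : Finset ℕ} (hN : N ⊆ Finset.range M) (hN' : N' ⊆ Finset.range M)
    {g : Fin (N.card + 1) → ℕ} {w : Fin (M + 1 - N.card) → ℕ}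
    {g' : Fin (N'.card + 1) → ℕ} {w' : Fin (M + 1 - N'.card) → ℕ}
    (hg : IsPathHom (N.card + 1) n g) (hg' : IsPathHom (N'.card + 1) n g')
    (heq : phi M N hN g w = phi M N' hN' g' w') : N = N' := by
  ext t
  by_cases ht : t < M
  · have p1 : t + 1 < M + 1 := by omega
    have p2 : t < M + 1 := by omega
    have h1 := phi_move_iff hN g w hg ht p1 p2
    have h2 := phi_move_iff hN' g' w' hg' ht p1 p2
    rw [heq] at h1
    exact h1.trans h2.symm
  · constructor
    · intro hmem; exact absurd (Finset.mem_range.1 (hN hmem)) ht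
    · intro hmem; exact absurd (Finset.mem_range.1 (hN' hmem)) ht

lemma phi_inj_gw {N : Finset ℕ} (hN : N ⊆ Finset.range M)
    {g g' : Fin (N.card + 1) → ℕ} {w w' : Fin (M + 1 - N.card) → ℕ}
    (heq : phi M N hN g w = phi M N hN g' w') : g = g' ∧ w = w' := by
  have hcard : N.card ≤ M := card_le_of_subset_range hN
  constructor
  · funext s
    obtain ⟨t, htM, hct⟩ := exists_cnt_eq hN (Nat.lt_succ_iff.1 s.2)
    have hp : t < M + 1 := by omega
    have hc : cnt N t < N.card + 1 := by omega
    have hs : s = ⟨cnt N t, hc⟩ := Fin.val_injective hct.symm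
    have h1 : (phi M N hN g w ⟨t, hp⟩).1 = g ⟨cnt N t, hc⟩ := phi_fst hN g w ⟨t, hp⟩ hc
    have h2 : (phi M N hN g' w' ⟨t, hp⟩).1 = g' ⟨cnt N t, hc⟩ := phi_fst hN g' w' ⟨t, hp⟩ hc
    rw [hs, ← h1, ← h2, heq]
  · funext u
    have hu : u.1 ≤ M - N.card := by have := u.2; omega
    obtain ⟨t, htM, hct⟩ := exists_bcnt_eq hN hu
    have hp : t < M + 1 := by omega
    have hc : t - cnt N t < M + 1 - N.card := by omega
    have hs : u = ⟨t - cnt N t, hc⟩ := Fin.val_injective hct.symm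
    have h1 : (phi M N hN g w ⟨t, hp⟩).2 = w ⟨t - cnt N t, hc⟩ := phi_snd hN g w ⟨t, hp⟩ hc
    have h2 : (phi M N hN g' w' ⟨t, hp⟩).2 = w' ⟨t - cnt N t, hc⟩ := phi_snd hN g' w' ⟨t, hp⟩ hc
    rw [hs, ← h1, ← h2, heq]

end inj

lemma exists_decomp (M n k i j : ℕ) (f : Fin (M + 1) → ℕ × ℕ)
    (hf : IsGridWHom (M + 1) n k f) (hf0 : f ⟨0, Nat.succ_pos M⟩ = (i, j)) :
    ∃ (N : Finset ℕ) (hN : N ⊆ Finset.range M) (g : Fin (N.card + 1) → ℕ)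
      (w : Fin (M + 1 - N.card) → ℕ),
      IsPathHom (N.card + 1) n g ∧ g ⟨0, Nat.succ_pos _⟩ = i ∧
      IsPathWHom (M + 1 - N.card) k w ∧ (∀ h : 0 < M + 1 - N.card, w ⟨0, h⟩ = j) ∧
      phi M N hN g w = f := by
  classical
  set F : ℕ → ℕ × ℕ := fun t => if h : t < M + 1 then f ⟨t, h⟩ else (0, 0) with hFdef
  set N : Finset ℕ := (Finset.range M).filter (fun t => (F (t + 1)).1 ≠ (F t).1) with hNdef
  have hN : N ⊆ Finset.range M := Finset.filter_subset _ _
  have hcard : N.card ≤ M := card_le_of_subset_range hN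
  have hFval : ∀ (t : ℕ) (h : t < M + 1), F t = f ⟨t, h⟩ := fun t h => dif_pos h
  have hmemN : ∀ t : ℕ, t ∈ N ↔ (t < M ∧ (F (t + 1)).1 ≠ (F t).1) := by
    intro t
    rw [hNdef, Finset.mem_filter, Finset.mem_range]
  have hstepF : ∀ t, t < M → (F (t + 1) = F t ∨
      (natAdj (F (t + 1)).1 (F t).1 ∧ (F (t + 1)).2 = (F t).2) ∨
      ((F (t + 1)).1 = (F t).1 ∧ natAdj (F (t + 1)).2 (F t).2)) := by
    intro t ht
    rw [hFval (t + 1) (by omega), hFval t (by omega)]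
    exact hf.2 t (by omega)
  have hmove : ∀ t, t ∈ N → (natAdj (F (t + 1)).1 (F t).1 ∧ (F (t + 1)).2 = (F t).2) := by
    intro t ht
    rw [hmemN] at ht
    rcases hstepF t ht.1 with h | h | h
    · exact absurd (congrArg Prod.fst h) ht.2
    · exact h
    · exact absurd h.1 ht.2
  have hstay : ∀ t, t < M → t ∉ N →
      ((F (t + 1)).1 = (F t).1 ∧ ((F (t + 1)).2 = (F t).2 ∨ natAdj (F (t + 1)).2 (F t).2)) := by
    intro t ht hnot
    have h1 : (F (t + 1)).1 = (F t).1 := by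
      by_contra hne
      exact hnot ((hmemN t).2 ⟨ht, hne⟩)
    refine ⟨h1, ?_⟩
    rcases hstepF t ht with h | h | h
    · exact Or.inl (congrArg Prod.snd h)
    · exfalso; rcases h.1 with h2 | h2 <;> omega
    · exact Or.inr h.2
  have const1 : ∀ t t', t ≤ M → t' ≤ M → cnt N t = cnt N t' → (F t).1 = (F t').1 := by
    refine const_aux' _ M (cnt N) (cnt_mono N) ?_
    intro t ht hc
    have h1 := cnt_succ N t
    have hnot : t ∉ N := by
      intro hmem
      rw [if_pos hmem] at h1
      omega
    exact (hstay t ht hnot).1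
  have const2 : ∀ t t', t ≤ M → t' ≤ M → t - cnt N t = t' - cnt N t' → (F t).2 = (F t').2 := by
    refine const_aux' _ M (fun t => t - cnt N t) (bcnt_mono N) ?_
    intro t ht hc
    have hc' : (t + 1) - cnt N (t + 1) = t - cnt N t := hc
    have h1 := cnt_succ N t
    have h2 := cnt_le N t
    have hmem : t ∈ N := by
      by_contra hnot
      rw [if_neg hnot] at h1
      omega
    exact (hmove t hmem).2
  have hcntle : ∀ t, t ≤ M → cnt N t ≤ N.card := fun t ht =>
    le_trans (cnt_mono N ht) (le_of_eq (cnt_eq_card hN le_rfl))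
  have hble : ∀ t, t ≤ M → t - cnt N t ≤ M - N.card := by
    intro t ht
    have h1 : t - cnt N t ≤ M - cnt N M := bcnt_mono N ht
    have h2 := cnt_eq_card hN (le_refl M)
    omega
  have hex1 : ∀ s : Fin (N.card + 1), ∃ t, cnt N t = s.1 := fun s =>
    (exists_cnt_eq hN (Nat.lt_succ_iff.1 s.2)).imp (fun t ht => ht.2)
  have hex2 : ∀ u : Fin (M + 1 - N.card), ∃ t, t - cnt N t = u.1 := by
    intro u
    have hu := u.2
    exact (exists_bcnt_eq hN (by omega)).imp (fun t ht => ht.2)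
  have htau_le : ∀ s : Fin (N.card + 1), Nat.find (hex1 s) ≤ M := by
    intro s
    obtain ⟨t, htM, hct⟩ := exists_cnt_eq hN (Nat.lt_succ_iff.1 s.2)
    exact le_trans (Nat.find_min' (hex1 s) hct) htM
  have hsig_le : ∀ u : Fin (M + 1 - N.card), Nat.find (hex2 u) ≤ M := by
    intro u
    have hu := u.2
    obtain ⟨t, htM, hct⟩ := exists_bcnt_eq hN (show u.1 ≤ M - N.card by omega)
    exact le_trans (Nat.find_min' (hex2 u) hct) htM
  have hFbound : ∀ t, t ≤ M → ((F t).1 < n ∧ (F t).2 < k) := by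
    intro t ht
    rw [hFval t (by omega)]
    exact hf.1 _
  refine ⟨N, hN, fun s => (F (Nat.find (hex1 s))).1, fun u => (F (Nat.find (hex2 u))).2,
    ⟨?_, ?_⟩, ?_, ⟨?_, ?_⟩, ?_, ?_⟩
  · -- bounds for g
    intro s
    exact (hFbound _ (htau_le s)).1
  · -- hom step for g
    intro x hx
    have hxcard : x < N.card := by omega
    have hts : cnt N (Nat.find (hex1 ⟨x + 1, hx⟩)) = x + 1 := Nat.find_spec (hex1 ⟨x + 1, hx⟩)
    have htle : Nat.find (hex1 ⟨x + 1, hx⟩) ≤ M := htau_le _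
    have htpos : Nat.find (hex1 ⟨x + 1, hx⟩) ≠ 0 := by
      intro h0
      rw [h0, cnt_zero] at hts
      omega
    obtain ⟨u, hu⟩ : ∃ u, Nat.find (hex1 ⟨x + 1, hx⟩) = u + 1 :=
      ⟨Nat.find (hex1 ⟨x + 1, hx⟩) - 1, by omega⟩
    have hcu1 : cnt N (u + 1) = x + 1 := by rw [← hu]; exact hts
    have hmin : cnt N u ≠ x + 1 := Nat.find_min (hex1 ⟨x + 1, hx⟩) (by omega)
    have hmono := cnt_mono N (Nat.le_succ u)
    have h1 := cnt_succ N u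
    have hcu : cnt N u = x := by split_ifs at h1 <;> omega
    have humem : u ∈ N := by
      by_contra hnot
      have h2 := cnt_succ N u
      rw [if_neg hnot] at h2
      omega
    have hmv := hmove u humem
    have e1 : (F (Nat.find (hex1 ⟨x + 1, hx⟩))).1 = (F (u + 1)).1 := by rw [hu]
    have e2 : (F (Nat.find (hex1 ⟨x, Nat.lt_of_succ_lt hx⟩))).1 = (F u).1 := by
      refine const1 _ u (htau_le _) (by omega) ?_
      rw [Nat.find_spec (hex1 ⟨x, Nat.lt_of_succ_lt hx⟩)]
      exact hcu.symm
    show (F (Nat.find (hex1 ⟨x + 1, hx⟩))).1 = (F (Nat.find (hex1 ⟨x, Nat.lt_of_succ_lt hx⟩))).1 + 1 ∨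
      (F (Nat.find (hex1 ⟨x, Nat.lt_of_succ_lt hx⟩))).1 = (F (Nat.find (hex1 ⟨x + 1, hx⟩))).1 + 1
    rw [e1, e2]
    exact hmv.1
  · -- g 0 = i
    have h0 : (F 0).1 = i := by rw [hFval 0 (Nat.succ_pos M), hf0]
    show (F (Nat.find (hex1 ⟨0, Nat.succ_pos _⟩))).1 = i
    refine Eq.trans ?_ h0
    refine const1 _ 0 (htau_le _) (by omega) ?_
    rw [Nat.find_spec (hex1 ⟨0, Nat.succ_pos _⟩), cnt_zero]
  · -- bounds for w
    intro u
    exact (hFbound _ (hsig_le u)).2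
  · -- whom step for w
    intro x hx
    have hts : Nat.find (hex2 ⟨x + 1, hx⟩) - cnt N (Nat.find (hex2 ⟨x + 1, hx⟩)) = x + 1 :=
      Nat.find_spec (hex2 ⟨x + 1, hx⟩)
    have htle : Nat.find (hex2 ⟨x + 1, hx⟩) ≤ M := hsig_le _
    have htpos : Nat.find (hex2 ⟨x + 1, hx⟩) ≠ 0 := by
      intro h0
      rw [h0, cnt_zero] at hts
      omega
    obtain ⟨v, hv⟩ : ∃ v, Nat.find (hex2 ⟨x + 1, hx⟩) = v + 1 :=
      ⟨Nat.find (hex2 ⟨x + 1, hx⟩) - 1, by omega⟩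
    have hbv1 : (v + 1) - cnt N (v + 1) = x + 1 := by rw [← hv]; exact hts
    have hmin : v - cnt N v ≠ x + 1 := Nat.find_min (hex2 ⟨x + 1, hx⟩) (by omega)
    have hmono : v - cnt N v ≤ (v + 1) - cnt N (v + 1) := bcnt_mono N (Nat.le_succ v)
    have h1 := cnt_succ N v
    have h2 := cnt_le N v
    have hbv : v - cnt N v = x := by split_ifs at h1 <;> omega
    have hvnot : v ∉ N := by
      intro hmem
      rw [if_pos hmem] at h1
      omega
    have hst := hstay v (by omega) hvnot
    have e1 : (F (Nat.find (hex2 ⟨x + 1, hx⟩))).2 = (F (v + 1)).2 := by rw [hv]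
    have e2 : (F (Nat.find (hex2 ⟨x, Nat.lt_of_succ_lt hx⟩))).2 = (F v).2 := by
      refine const2 _ v (hsig_le _) (by omega) ?_
      rw [Nat.find_spec (hex2 ⟨x, Nat.lt_of_succ_lt hx⟩)]
      exact hbv.symm
    show (F (Nat.find (hex2 ⟨x + 1, hx⟩))).2 = (F (Nat.find (hex2 ⟨x, Nat.lt_of_succ_lt hx⟩))).2 ∨
      (F (Nat.find (hex2 ⟨x + 1, hx⟩))).2 = (F (Nat.find (hex2 ⟨x, Nat.lt_of_succ_lt hx⟩))).2 + 1 ∨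
      (F (Nat.find (hex2 ⟨x, Nat.lt_of_succ_lt hx⟩))).2 = (F (Nat.find (hex2 ⟨x + 1, hx⟩))).2 + 1
    rw [e1, e2]
    rcases hst.2 with h | h
    · exact Or.inl h
    · rcases h with h | h
      · exact Or.inr (Or.inl h)
      · exact Or.inr (Or.inr h)
  · -- w 0 = j
    intro hpos
    have h0 : (F 0).2 = j := by rw [hFval 0 (Nat.succ_pos M), hf0]
    show (F (Nat.find (hex2 ⟨0, hpos⟩))).2 = j
    refine Eq.trans ?_ h0
    refine const2 _ 0 (hsig_le _) (by omega) ?_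
    rw [Nat.find_spec (hex2 ⟨0, hpos⟩)]
    simp [cnt_zero]
  · -- phi = f
    funext t
    have htM : t.1 ≤ M := Nat.lt_succ_iff.1 t.2
    refine Prod.ext ?_ ?_
    · have hp : cnt N t.1 < N.card + 1 := Nat.lt_succ_of_le (hcntle t.1 htM)
      rw [phi_fst hN _ _ t hp]
      show (F (Nat.find (hex1 ⟨cnt N t.1, hp⟩))).1 = (f t).1
      have hft : (F t.1).1 = (f t).1 := by rw [hFval t.1 t.2]
      rw [← hft]
      refine const1 _ t.1 (htau_le _) htM ?_
      rw [Nat.find_spec (hex1 ⟨cnt N t.1, hp⟩)]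
    · have hp : t.1 - cnt N t.1 < M + 1 - N.card := by
        have := hble t.1 htM
        omega
      rw [phi_snd hN _ _ t hp]
      show (F (Nat.find (hex2 ⟨t.1 - cnt N t.1, hp⟩))).2 = (f t).2
      have hft : (F t.1).2 = (f t).2 := by rw [hFval t.1 t.2]
      rw [← hft]
      refine const2 _ t.1 (hsig_le _) htM ?_
      rw [Nat.find_spec (hex2 ⟨t.1 - cnt N t.1, hp⟩)]

instance finiteHom (L n i : ℕ) :
    Finite {g : Fin L → ℕ // IsPathHom L n g ∧ ∀ h : 0 < L, g ⟨0, h⟩ = i} := by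
  refine Finite.of_injective (fun g => (fun x => (⟨g.1 x, g.2.1.1 x⟩ : Fin n))) ?_
  intro a b h
  apply Subtype.ext
  funext x
  exact congrArg Fin.val (congrFun h x)

instance finiteWHom (L k j : ℕ) :
    Finite {w : Fin L → ℕ // IsPathWHom L k w ∧ ∀ h : 0 < L, w ⟨0, h⟩ = j} := by
  refine Finite.of_injective (fun g => (fun x => (⟨g.1 x, g.2.1.1 x⟩ : Fin k))) ?_
  intro a b h
  apply Subtype.ext
  funext x
  exact congrArg Fin.val (congrFun h x)

lemma natCard_sigma {ι : Type*} [Fintype ι] (α : ι → Type*) [∀ i, Finite (α i)] :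
    Nat.card ((i : ι) × α i) = ∑ i, Nat.card (α i) := by
  letI : ∀ i, Fintype (α i) := fun i => Fintype.ofFinite (α i)
  simp only [Nat.card_eq_fintype_card, Fintype.card_sigma]

lemma card_eq_sum_powerset (M n k i j : ℕ) :
    Nat.card {f : Fin (M + 1) → ℕ × ℕ //
        IsGridWHom (M + 1) n k f ∧ ∀ h : 0 < M + 1, f ⟨0, h⟩ = (i, j)} =
    ∑ N ∈ (Finset.range M).powerset,
      homCount (N.card + 1) n i * whomCount (M + 1 - N.card) k j := by
  classical
  have key : Nat.card ((N : {N : Finset ℕ // N ∈ (Finset.range M).powerset}) ×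
      ({g : Fin (N.1.card + 1) → ℕ // IsPathHom (N.1.card + 1) n g ∧
          ∀ h : 0 < N.1.card + 1, g ⟨0, h⟩ = i} ×
       {w : Fin (M + 1 - N.1.card) → ℕ // IsPathWHom (M + 1 - N.1.card) k w ∧
          ∀ h : 0 < M + 1 - N.1.card, w ⟨0, h⟩ = j})) =
      Nat.card {f : Fin (M + 1) → ℕ × ℕ //
        IsGridWHom (M + 1) n k f ∧ ∀ h : 0 < M + 1, f ⟨0, h⟩ = (i, j)} := by
    refine Nat.card_eq_of_bijective
      (fun p => ⟨phi M p.1.1 (Finset.mem_powerset.1 p.1.2) p.2.1.1 p.2.2.1, ?_, ?_⟩) ⟨?_, ?_⟩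
    · exact phi_isGridWHom (Finset.mem_powerset.1 p.1.2) p.2.1.1 p.2.2.1 p.2.1.2.1 p.2.2.2.1
    · intro h
      have hcard : p.1.1.card ≤ M := card_le_of_subset_range (Finset.mem_powerset.1 p.1.2)
      rw [phi_zero (Finset.mem_powerset.1 p.1.2) p.2.1.1 p.2.2.1 h (Nat.succ_pos _)
        (by omega)]
      rw [p.2.1.2.2 (Nat.succ_pos _), p.2.2.2.2 (by omega)]
    · rintro ⟨⟨N, hNp⟩, ⟨g, hg⟩, ⟨w, hw⟩⟩ ⟨⟨N', hNp'⟩, ⟨g', hg'⟩, ⟨w', hw'⟩⟩ hpq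
      have heq : phi M N (Finset.mem_powerset.1 hNp) g w =
          phi M N' (Finset.mem_powerset.1 hNp') g' w' := congrArg Subtype.val hpq
      have hNN : N = N' := phi_inj_N _ _ hg.1 hg'.1 heq
      subst hNN
      obtain ⟨hgg, hww⟩ := phi_inj_gw (Finset.mem_powerset.1 hNp) heq
      subst hgg
      subst hww
      rfl
    · rintro ⟨f, hf, hf0⟩
      obtain ⟨N, hN, g, w, hg, hg0, hw, hw0, hphi⟩ :=
        exists_decomp M n k i j f hf (hf0 (Nat.succ_pos M))
      exact ⟨⟨⟨N, Finset.mem_powerset.2 hN⟩, ⟨g, hg, fun _ => hg0⟩, ⟨w, hw, hw0⟩⟩,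
        Subtype.ext hphi⟩
  rw [← key, natCard_sigma]
  simp only [Nat.card_prod]
  rw [← Finset.sum_coe_sort ((Finset.range M).powerset)
    (fun N => homCount (N.card + 1) n i * whomCount (M + 1 - N.card) k j)]
  exact Finset.sum_congr rfl (fun x _ => rfl)

lemma sum_powerset_card (M : ℕ) (G : ℕ → ℕ) :
    ∑ N ∈ (Finset.range M).powerset, G N.card =
    ∑ h ∈ Finset.range (M + 1), Nat.choose M h * G h := by
  classical
  have hmaps : ∀ N ∈ (Finset.range M).powerset, N.card ∈ Finset.range (M + 1) := by
    intro N hN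
    have := card_le_of_subset_range (Finset.mem_powerset.1 hN)
    exact Finset.mem_range.2 (by omega)
  rw [← Finset.sum_fiberwise_of_maps_to hmaps (fun N => G N.card)]
  refine Finset.sum_congr rfl ?_
  intro h hh
  have hcongr : ∀ N ∈ ((Finset.range M).powerset.filter (fun N => N.card = h)),
      G N.card = G h := by
    intro N hN
    rw [(Finset.mem_filter.1 hN).2]
  rw [Finset.sum_congr rfl hcongr, Finset.sum_const, ← Finset.powersetCard_eq_filter,
    Finset.card_powersetCard, Finset.card_range, smul_eq_mul]

end GridAux

/-- for `i < n/2 − 1` and `j < k/2 − 1`,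
`|WHom^{ij}(P_m, P_n □ P_k)|
  = Σ_{h=0}^{m−1} C(m−1, h) |Hom^i(P_{h+1}, P_n)| |WHom^j(P_{m−h}, P_k)|`. -/
theorem gridWHomCountAt_formula (m n k i j : ℕ) (hm : 0 < m) (hn : 0 < n) (hk : 0 < k)
    (hi : (i : ℚ) < (n : ℚ) / 2 - 1) (hj : (j : ℚ) < (k : ℚ) / 2 - 1) :
    gridWHomCountAt m n k i j =
      ∑ h ∈ Finset.range m,
        Nat.choose (m - 1) h * homCount (h + 1) n i * whomCount (m - h) k j := by
  obtain ⟨M, rfl⟩ : ∃ M, m = M + 1 := ⟨m - 1, by omega⟩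
  calc gridWHomCountAt (M + 1) n k i j
      = ∑ N ∈ (Finset.range M).powerset,
          homCount (N.card + 1) n i * whomCount (M + 1 - N.card) k j :=
        GridAux.card_eq_sum_powerset M n k i j
    _ = ∑ h ∈ Finset.range (M + 1),
          Nat.choose M h * (homCount (h + 1) n i * whomCount (M + 1 - h) k j) :=
        GridAux.sum_powerset_card M (fun h => homCount (h + 1) n i * whomCount (M + 1 - h) k j)
    _ = ∑ h ∈ Finset.range (M + 1),
          Nat.choose (M + 1 - 1) h * homCount (h + 1) n i * whomCount (M + 1 - h) k j := by
        refine Finset.sum_congr rfl fun h _ => ?_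
        simp [Nat.add_sub_cancel, Nat.mul_assoc]
end

section
/- Case 1 of the main counting theorem: let m, n be positive integers and j a non-negative integer with m ≤ n and j < n. The number of weak homomorphisms f from P_m to P_n with f(0) = j such that the number of steps x with f(x+1) = f(x) − 1 strictly exceeds j equals Σ_{t=j+1}^{j+⌊(m−j−1)/2⌋} Σ_{s=t−j}^{m−1−t} [ binom(m−1; s, t, m−1−s−t) − binom(m−1; t−j−1, s+j+1, m−1−s−t) ], where sums whose upper limit is below their lower limit are 0. -/
/-- The multinomial coefficient `binom(n; a, b, c)`, with integer arguments: it equals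
`n! / (a! b! c!)` when `a, b, c` are non-negative and `a + b + c = n`, and is `0`
otherwise. -/
def multi3 (n a b c : ℤ) : ℕ :=
  if 0 ≤ a ∧ 0 ≤ b ∧ 0 ≤ c ∧ a + b + c = n then
    Nat.factorial n.toNat / (Nat.factorial a.toNat * Nat.factorial b.toNat * Nat.factorial c.toNat)
  else 0

/-- The number of steps `x` with `f(x+1) = f(x) − 1`. -/
noncomputable def downSteps (m : ℕ) (f : Fin m → ℕ) : ℕ :=
  Nat.card {x : ℕ // ∃ h : x + 1 < m, f ⟨x, Nat.lt_of_succ_lt h⟩ = f ⟨x + 1, h⟩ + 1}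

namespace Whom1
open Finset Nat

variable {N : ℕ}

def sval (x : Fin 3) : ℤ := (x : ℤ) - 1

def flip3 (x : Fin 3) : Fin 3 := ⟨2 - (x : ℕ), by omega⟩

def psum (c : Fin N → Fin 3) (k : ℕ) : ℤ :=
  ∑ i ∈ univ.filter (fun i : Fin N => (i : ℕ) < k), sval (c i)

def ups (c : Fin N → Fin 3) : ℕ := (univ.filter (fun i => c i = 2)).card
def downs (c : Fin N → Fin 3) : ℕ := (univ.filter (fun i => c i = 0)).card

lemma psum_zero (c : Fin N → Fin 3) : psum c 0 = 0 := by
  simp [psum]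

lemma psum_succ (c : Fin N → Fin 3) (k : ℕ) (hk : k < N) :
    psum c (k + 1) = psum c k + sval (c ⟨k, hk⟩) := by
  rw [psum, psum, show univ.filter (fun i : Fin N => (i : ℕ) < k + 1)
      = insert ⟨k, hk⟩ (univ.filter (fun i : Fin N => (i : ℕ) < k)) from ?_,
    Finset.sum_insert (by simp)]
  · ring
  · ext i
    simp only [Finset.mem_filter, Finset.mem_insert, Finset.mem_univ, true_and, Fin.ext_iff]
    omega

lemma psum_ge (c : Fin N → Fin 3) (k : ℕ) (hk : N ≤ k) :
    psum c k = psum c N := by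
  unfold psum
  congr 1
  ext i
  have := i.isLt
  simp only [Finset.mem_filter, Finset.mem_univ, true_and]
  omega

lemma sval_bounds : ∀ x : Fin 3, -1 ≤ sval x ∧ sval x ≤ 1 := by decide

lemma psum_succ_le (c : Fin N → Fin 3) (k : ℕ) :
    psum c k - 1 ≤ psum c (k + 1) ∧ psum c (k + 1) ≤ psum c k + 1 := by
  by_cases hk : k < N
  · rw [psum_succ c k hk]
    have := sval_bounds (c ⟨k, hk⟩)
    omega
  · rw [psum_ge c (k + 1) (by omega), psum_ge c k (by omega)]
    omega

def uk (c : Fin N → Fin 3) (k : ℕ) : ℕ :=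
  (univ.filter (fun i : Fin N => (i : ℕ) < k ∧ c i = 2)).card

def dk (c : Fin N → Fin 3) (k : ℕ) : ℕ :=
  (univ.filter (fun i : Fin N => (i : ℕ) < k ∧ c i = 0)).card

lemma psum_eq_uk_dk (c : Fin N → Fin 3) (k : ℕ) :
    psum c k = (uk c k : ℤ) - dk c k := by
  have h : ∀ x : Fin 3, sval x = (if x = 2 then (1 : ℤ) else 0) - (if x = 0 then 1 else 0) := by
    decide
  rw [psum, uk, dk]
  simp only [h]
  rw [Finset.sum_sub_distrib, Finset.sum_boole, Finset.sum_boole, Finset.filter_filter,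
    Finset.filter_filter]

lemma uk_top (c : Fin N → Fin 3) : uk c N = ups c := by
  unfold uk ups
  congr 1
  ext i
  simp [i.isLt]

lemma dk_top (c : Fin N → Fin 3) : dk c N = downs c := by
  unfold dk downs
  congr 1
  ext i
  simp [i.isLt]

lemma psum_top (c : Fin N → Fin 3) : psum c N = (ups c : ℤ) - downs c := by
  rw [psum_eq_uk_dk, uk_top, dk_top]

lemma ups_add_downs_le (c : Fin N → Fin 3) : ups c + downs c ≤ N := by
  rw [ups, downs, ← Finset.card_union_of_disjoint]
  · calc _ ≤ (univ : Finset (Fin N)).card := Finset.card_le_univ _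
      _ = N := by simp
  · rw [Finset.disjoint_filter]
    intro i _ h2 h0
    rw [h2] at h0
    exact absurd h0 (by decide)

/-- Discrete intermediate value: if steps decrease by at most 1. -/
lemma ivt (g : ℕ → ℤ) (hstep : ∀ k, g k - 1 ≤ g (k + 1)) (T : ℤ) (M : ℕ)
    (h0 : T ≤ g 0) (hM : g M ≤ T) : ∃ k, k ≤ M ∧ g k = T := by
  induction M with
  | zero => exact ⟨0, le_rfl, le_antisymm hM h0⟩
  | succ M ih =>
    by_cases h : g M ≤ T
    · obtain ⟨k, hk, hk2⟩ := ih h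
      exact ⟨k, hk.trans (Nat.le_succ M), hk2⟩
    · exact ⟨M + 1, le_rfl, le_antisymm hM (by have := hstep M; omega)⟩

/-- `c` hits level `-(j+1)`. -/
def Hit (j : ℕ) (c : Fin N → Fin 3) : Prop := ∃ k, psum c k = -(j : ℤ) - 1

instance (j : ℕ) : DecidablePred (Hit j (N := N)) := fun c =>
  decidable_of_iff (∃ k : Fin (N + 1), psum c (k : ℕ) = -(j : ℤ) - 1)
    (by
      constructor
      · rintro ⟨k, hk⟩; exact ⟨k, hk⟩
      · rintro ⟨k, hk⟩
        by_cases h : k ≤ N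
        · exact ⟨⟨k, by omega⟩, hk⟩
        · exact ⟨⟨N, by omega⟩, by rw [show ((⟨N, by omega⟩ : Fin (N+1)) : ℕ) = N from rfl,
            ← psum_ge c k (by omega)]; exact hk⟩)

noncomputable def refl (j : ℕ) (c : Fin N → Fin 3) : Fin N → Fin 3 :=
  if hc : Hit j c then
    fun i => if (i : ℕ) < Nat.find hc then c i else flip3 (c i)
  else c

lemma flip3_flip3 : ∀ x : Fin 3, flip3 (flip3 x) = x := by decide
lemma flip3_eq_two : ∀ x : Fin 3, flip3 x = 2 ↔ x = 0 := by decide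
lemma flip3_eq_zero : ∀ x : Fin 3, flip3 x = 0 ↔ x = 2 := by decide

lemma find_le {j : ℕ} {c : Fin N → Fin 3} (hc : Hit j c) : Nat.find hc ≤ N := by
  obtain ⟨k, hk⟩ := hc
  by_cases h : k ≤ N
  · exact (Nat.find_min' _ hk).trans h
  · exact Nat.find_min' _ (by rw [psum_ge c k (by omega)] at hk; exact hk)

lemma refl_apply_lt {j : ℕ} {c : Fin N → Fin 3} (hc : Hit j c) (i : Fin N)
    (h : (i : ℕ) < Nat.find hc) : refl j c i = c i := by
  rw [refl, dif_pos hc, if_pos h]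

lemma refl_apply_ge {j : ℕ} {c : Fin N → Fin 3} (hc : Hit j c) (i : Fin N)
    (h : ¬ (i : ℕ) < Nat.find hc) : refl j c i = flip3 (c i) := by
  rw [refl, dif_pos hc, if_neg h]

lemma psum_refl_le {j : ℕ} {c : Fin N → Fin 3} (hc : Hit j c) (k : ℕ)
    (hk : k ≤ Nat.find hc) : psum (refl j c) k = psum c k := by
  unfold psum
  refine Finset.sum_congr rfl fun i hi => ?_
  simp only [Finset.mem_filter, Finset.mem_univ, true_and] at hi
  rw [refl_apply_lt hc i (by omega)]

lemma filter_split (K : ℕ) (p : Fin N → Prop) [DecidablePred p] :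
    (univ.filter p).card = (univ.filter (fun i : Fin N => (i : ℕ) < K ∧ p i)).card
      + (univ.filter (fun i : Fin N => ¬((i : ℕ) < K) ∧ p i)).card := by
  have h := Finset.card_filter_add_card_filter_not
    (s := (univ : Finset (Fin N)).filter p) (p := fun i : Fin N => (i : ℕ) < K)
  rw [Finset.filter_filter, Finset.filter_filter] at h
  rw [← h]
  congr 1 <;> · congr 1; ext i; simp only [Finset.mem_filter]; tauto

lemma ups_refl {j : ℕ} {c : Fin N → Fin 3} (hc : Hit j c) :
    ups (refl j c) + dk c (Nat.find hc) = uk c (Nat.find hc) + downs c := by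
  set K := Nat.find hc with hK
  have h1 : ups (refl j c) = uk c K +
      (univ.filter (fun i : Fin N => ¬((i : ℕ) < K) ∧ c i = 0)).card := by
    rw [ups, filter_split K]
    congr 1
    · rw [uk]; congr 1; ext i
      simp only [Finset.mem_filter, Finset.mem_univ, true_and, and_congr_right_iff]
      intro hi
      rw [refl_apply_lt hc i hi]
    · congr 1; ext i
      simp only [Finset.mem_filter, Finset.mem_univ, true_and, and_congr_right_iff]
      intro hi
      rw [refl_apply_ge hc i hi, flip3_eq_two]
  have h2 : downs c = dk c K +
      (univ.filter (fun i : Fin N => ¬((i : ℕ) < K) ∧ c i = 0)).card := by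
    rw [downs, filter_split K]; rfl
  omega

lemma downs_refl {j : ℕ} {c : Fin N → Fin 3} (hc : Hit j c) :
    downs (refl j c) + uk c (Nat.find hc) = dk c (Nat.find hc) + ups c := by
  set K := Nat.find hc with hK
  have h1 : downs (refl j c) = dk c K +
      (univ.filter (fun i : Fin N => ¬((i : ℕ) < K) ∧ c i = 2)).card := by
    rw [downs, filter_split K]
    congr 1
    · rw [dk]; congr 1; ext i
      simp only [Finset.mem_filter, Finset.mem_univ, true_and, and_congr_right_iff]
      intro hi
      rw [refl_apply_lt hc i hi]
    · congr 1; ext i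
      simp only [Finset.mem_filter, Finset.mem_univ, true_and, and_congr_right_iff]
      intro hi
      rw [refl_apply_ge hc i hi, flip3_eq_zero]
  have h2 : ups c = uk c K +
      (univ.filter (fun i : Fin N => ¬((i : ℕ) < K) ∧ c i = 2)).card := by
    rw [ups, filter_split K]; rfl
  omega

lemma dk_eq {j : ℕ} {c : Fin N → Fin 3} (hc : Hit j c) :
    dk c (Nat.find hc) = uk c (Nat.find hc) + j + 1 := by
  have h := psum_eq_uk_dk c (Nat.find hc)
  rw [Nat.find_spec hc] at h
  omega

lemma ups_refl' {j : ℕ} {c : Fin N → Fin 3} (hc : Hit j c) :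
    ups (refl j c) + j + 1 = downs c := by
  have := ups_refl hc; have := dk_eq hc; omega

lemma downs_refl' {j : ℕ} {c : Fin N → Fin 3} (hc : Hit j c) :
    downs (refl j c) = ups c + j + 1 := by
  have := downs_refl hc; have := dk_eq hc; omega

lemma hit_refl {j : ℕ} {c : Fin N → Fin 3} (hc : Hit j c) : Hit j (refl j c) :=
  ⟨Nat.find hc, by rw [psum_refl_le hc _ le_rfl]; exact Nat.find_spec hc⟩

lemma find_refl {j : ℕ} {c : Fin N → Fin 3} (hc : Hit j c) :
    Nat.find (hit_refl hc) = Nat.find hc := by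
  apply le_antisymm
  · exact Nat.find_min' _ (by rw [psum_refl_le hc _ le_rfl]; exact Nat.find_spec hc)
  · by_contra h
    push_neg at h
    exact Nat.find_min hc h
      (by rw [← psum_refl_le hc _ h.le]; exact Nat.find_spec (hit_refl hc))

lemma refl_refl {j : ℕ} {c : Fin N → Fin 3} (hc : Hit j c) : refl j (refl j c) = c := by
  funext i
  by_cases h : (i : ℕ) < Nat.find hc
  · rw [refl_apply_lt (hit_refl hc) i (by rw [find_refl hc]; exact h),
      refl_apply_lt hc i h]
  · rw [refl_apply_ge (hit_refl hc) i (by rw [find_refl hc]; exact h),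
      refl_apply_ge hc i h, flip3_flip3]

/-- Any word with few enough ups hits the reflecting barrier. -/
lemma hit_of_counts {j : ℕ} {c : Fin N → Fin 3} (h : (ups c : ℤ) - downs c ≤ -(j : ℤ) - 1) :
    Hit j c := by
  obtain ⟨k, _, hk⟩ := ivt (psum c) (fun k => (psum_succ_le c k).1) (-(j : ℤ) - 1) N
    (by rw [psum_zero]; omega) (by rw [psum_top]; exact h)
  exact ⟨k, hk⟩

lemma card_class (a b : ℕ) (hab : a + b ≤ N) :
    ((univ : Finset (Fin N → Fin 3)).filter fun c => ups c = a ∧ downs c = b).card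
      = N ! / (a ! * b ! * (N - a - b)!) := by
  classical
  have hcard : ((univ : Finset (Fin N → Fin 3)).filter fun c => ups c = a ∧ downs c = b).card
      = ((univ.powersetCard a).sigma fun U : Finset (Fin N) => Uᶜ.powersetCard b).card := by
    refine Finset.card_bij'
      (fun c _ => (⟨univ.filter fun i => c i = 2, univ.filter fun i => c i = 0⟩ :
        Σ _ : Finset (Fin N), Finset (Fin N)))
      (fun p _ => fun i => if i ∈ p.1 then 2 else if i ∈ p.2 then 0 else 1)
      ?_ ?_ ?_ ?_
    · intro c hc
      simp only [Finset.mem_filter, Finset.mem_univ, true_and] at hc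
      simp only [Finset.mem_sigma, Finset.mem_powersetCard]
      refine ⟨⟨Finset.subset_univ _, hc.1⟩, ⟨?_, hc.2⟩⟩
      intro i hi
      simp only [Finset.mem_filter, Finset.mem_univ, true_and] at hi
      simp only [Finset.mem_compl, Finset.mem_filter, Finset.mem_univ, true_and, hi]
      decide
    · intro p hp
      simp only [Finset.mem_sigma, Finset.mem_powersetCard] at hp
      simp only [Finset.mem_filter, Finset.mem_univ, true_and]
      constructor
      · rw [ups, ← hp.1.2]
        congr 1
        ext i
        simp only [Finset.mem_filter, Finset.mem_univ, true_and]
        by_cases h1 : i ∈ p.1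
        · simp [h1]
        · by_cases h2 : i ∈ p.2 <;> simp [h1, h2]
      · rw [downs, ← hp.2.2]
        congr 1
        ext i
        simp only [Finset.mem_filter, Finset.mem_univ, true_and]
        by_cases h1 : i ∈ p.1
        · have : i ∉ p.2 := fun h => (Finset.mem_compl.1 (hp.2.1 h)) h1
          simp [h1, this]
        · by_cases h2 : i ∈ p.2 <;> simp [h1, h2]
    · intro c hc
      funext i
      by_cases h2 : c i = 2
      · simp [h2]
      · by_cases h0 : c i = 0
        · simp [h0]
        · have h1 : c i = 1 := by omega
          simp [h2, h0, h1]
    · intro p hp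
      obtain ⟨U, D⟩ := p
      simp only [Finset.mem_sigma, Finset.mem_powersetCard] at hp
      have hd : ∀ i ∈ D, i ∉ U := fun i hi => Finset.mem_compl.1 (hp.2.1 hi)
      have e1 : (univ.filter fun i : Fin N =>
          (if i ∈ U then (2 : Fin 3) else if i ∈ D then 0 else 1) = 2) = U := by
        ext i
        simp only [Finset.mem_filter, Finset.mem_univ, true_and]
        by_cases h1 : i ∈ U
        · simp [h1]
        · by_cases h2 : i ∈ D <;> simp [h1, h2]
      have e2 : (univ.filter fun i : Fin N =>
          (if i ∈ U then (2 : Fin 3) else if i ∈ D then 0 else 1) = 0) = D := by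
        ext i
        simp only [Finset.mem_filter, Finset.mem_univ, true_and]
        by_cases h1 : i ∈ U
        · have hnd : i ∉ D := fun h => hd i h h1
          simp [h1, hnd]
        · by_cases h2 : i ∈ D <;> simp [h1, h2]
      exact Sigma.ext e1 (heq_of_eq e2)
  rw [hcard, Finset.card_sigma]
  have hconst : ∀ U ∈ (univ : Finset (Fin N)).powersetCard a,
      (Uᶜ.powersetCard b).card = (N - a).choose b := by
    intro U hU
    rw [Finset.mem_powersetCard_univ] at hU
    rw [Finset.card_powersetCard, Finset.card_compl, hU, Fintype.card_fin]
  rw [Finset.sum_congr rfl hconst, Finset.sum_const, Finset.card_powersetCard,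
    Finset.card_univ, Fintype.card_fin, smul_eq_mul]
  have key : N ! = (N.choose a * (N - a).choose b) * (a ! * b ! * (N - a - b)!) := by
    have h1 := Nat.choose_mul_factorial_mul_factorial (show a ≤ N by omega)
    have h2 := Nat.choose_mul_factorial_mul_factorial (show b ≤ N - a by omega)
    calc N ! = N.choose a * a ! * (N - a)! := h1.symm
      _ = N.choose a * a ! * ((N - a).choose b * b ! * (N - a - b)!) := by rw [h2]
      _ = _ := by ring
  rw [key, Nat.mul_div_cancel _ (by positivity)]

lemma not_hit_iff {j : ℕ} (c : Fin N → Fin 3) :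
    (∀ k ≤ N, -(j : ℤ) ≤ psum c k) ↔ ¬ Hit j c := by
  constructor
  · rintro hb ⟨k, hk⟩
    by_cases h : k ≤ N
    · have := hb k h; omega
    · rw [psum_ge c k (by omega)] at hk
      have := hb N le_rfl; omega
  · intro hnh k hk
    by_contra h
    push_neg at h
    obtain ⟨k', _, hk'⟩ := ivt (psum c) (fun k => (psum_succ_le c k).1) (-(j : ℤ) - 1) k
      (by rw [psum_zero]; omega) (by omega)
    exact hnh ⟨k', hk'⟩

lemma card_good (j s t : ℕ) (ht : j + 1 ≤ t) (hs : t ≤ s + j) (hst : s + t ≤ N) :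
    ((univ : Finset (Fin N → Fin 3)).filter fun c => ups c = s ∧ downs c = t ∧
        ∀ k ≤ N, -(j : ℤ) ≤ psum c k).card
      + N ! / ((t - j - 1)! * (s + j + 1)! * (N - s - t)!)
      = N ! / (s ! * t ! * (N - s - t)!) := by
  classical
  have hbad : ((univ : Finset (Fin N → Fin 3)).filter fun c =>
        (ups c = s ∧ downs c = t) ∧ Hit j c).card
      = ((univ : Finset (Fin N → Fin 3)).filter fun c =>
        ups c = t - j - 1 ∧ downs c = s + j + 1).card := by
    refine Finset.card_bij' (fun c _ => refl j c) (fun c _ => refl j c) ?_ ?_ ?_ ?_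
    · intro c hc
      simp only [Finset.mem_filter, Finset.mem_univ, true_and] at hc ⊢
      obtain ⟨⟨hu, hd⟩, hh⟩ := hc
      have h1 := ups_refl' hh
      have h2 := downs_refl' hh
      omega
    · intro c hc
      simp only [Finset.mem_filter, Finset.mem_univ, true_and] at hc ⊢
      have hh : Hit j c := hit_of_counts (by rw [hc.1, hc.2]; omega)
      have h1 := ups_refl' hh
      have h2 := downs_refl' hh
      exact ⟨⟨by omega, by omega⟩, hit_refl hh⟩
    · intro c hc
      simp only [Finset.mem_filter, Finset.mem_univ, true_and] at hc
      exact refl_refl hc.2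
    · intro c hc
      simp only [Finset.mem_filter, Finset.mem_univ, true_and] at hc
      exact refl_refl (hit_of_counts (by rw [hc.1, hc.2]; omega))
  have hsplit := Finset.card_filter_add_card_filter_not
    (s := (univ : Finset (Fin N → Fin 3)).filter fun c => ups c = s ∧ downs c = t)
    (p := Hit j)
  rw [Finset.filter_filter, Finset.filter_filter] at hsplit
  have egood : ((univ : Finset (Fin N → Fin 3)).filter fun c =>
      (ups c = s ∧ downs c = t) ∧ ¬ Hit j c)
      = (univ.filter fun c => ups c = s ∧ downs c = t ∧ ∀ k ≤ N, -(j : ℤ) ≤ psum c k) := by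
    ext c
    simp only [Finset.mem_filter, Finset.mem_univ, true_and]
    rw [not_hit_iff c] at *
    tauto
  rw [egood, hbad, card_class s t hst,
    card_class (t - j - 1) (s + j + 1) (by omega),
    show N - (t - j - 1) - (s + j + 1) = N - s - t by omega] at hsplit
  omega

/-- The word of steps of a path. -/
def c_of (f : Fin (N + 1) → ℕ) (i : Fin N) : Fin 3 :=
  if f ⟨i.1 + 1, Nat.succ_lt_succ i.isLt⟩ = f ⟨i.1, i.isLt.trans (Nat.lt_succ_self N)⟩ + 1 then 2
  else if f ⟨i.1, i.isLt.trans (Nat.lt_succ_self N)⟩ = f ⟨i.1 + 1, Nat.succ_lt_succ i.isLt⟩ + 1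
    then 0 else 1

/-- The path determined by a word of steps. -/
def f_of (j : ℕ) (c : Fin N → Fin 3) (k : Fin (N + 1)) : ℕ := ((j : ℤ) + psum c k.1).toNat

lemma c_of_eq_two_iff (f : Fin (N + 1) → ℕ) (i : Fin N) :
    c_of f i = 2 ↔
      f ⟨i.1 + 1, Nat.succ_lt_succ i.isLt⟩ = f ⟨i.1, i.isLt.trans (Nat.lt_succ_self N)⟩ + 1 := by
  rw [c_of]
  split_ifs with h1 h2 <;> simp_all <;> omega

lemma c_of_eq_zero_iff (f : Fin (N + 1) → ℕ) (i : Fin N) :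
    c_of f i = 0 ↔
      f ⟨i.1, i.isLt.trans (Nat.lt_succ_self N)⟩ = f ⟨i.1 + 1, Nat.succ_lt_succ i.isLt⟩ + 1 := by
  rw [c_of]
  split_ifs with h1 h2 <;> simp_all <;> omega

/-- For a weak homomorphism, the step values reconstruct the path. -/
lemma sval_c_of {n : ℕ} (f : Fin (N + 1) → ℕ) (hf : IsPathWHom (N + 1) n f) (i : Fin N) :
    (f ⟨i.1 + 1, Nat.succ_lt_succ i.isLt⟩ : ℤ)
      = f ⟨i.1, i.isLt.trans (Nat.lt_succ_self N)⟩ + sval (c_of f i) := by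
  have htri := hf.2 i.1 (Nat.succ_lt_succ i.isLt)
  rw [c_of]
  split_ifs with h1 h2
  · rw [show sval 2 = 1 from by decide, h1]
    push_cast
    ring
  · rw [show sval 0 = -1 from by decide, h2]
    push_cast
    ring
  · have heq : f ⟨i.1 + 1, Nat.succ_lt_succ i.isLt⟩
        = f ⟨i.1, i.isLt.trans (Nat.lt_succ_self N)⟩ := by
      rcases htri with h | h | h
      · exact h
      · exact absurd h h1
      · exact absurd h h2
    rw [show sval 1 = 0 from by decide, heq]
    push_cast
    ring

/-- The path values in terms of partial sums. -/
lemma f_eq_psum {n j : ℕ} (f : Fin (N + 1) → ℕ) (hf : IsPathWHom (N + 1) n f)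
    (h0 : f ⟨0, Nat.succ_pos N⟩ = j) :
    ∀ k (hk : k ≤ N), (f ⟨k, Nat.lt_succ_of_le hk⟩ : ℤ) = j + psum (c_of f) k := by
  intro k
  induction k with
  | zero =>
    intro _
    rw [psum_zero, add_zero]
    exact_mod_cast h0
  | succ k ih =>
    intro hk
    have hkN : k < N := hk
    rw [psum_succ _ k hkN, show (⟨k + 1, Nat.lt_succ_of_le hk⟩ : Fin (N + 1))
      = ⟨(⟨k, hkN⟩ : Fin N).1 + 1, Nat.succ_lt_succ (⟨k, hkN⟩ : Fin N).isLt⟩ from rfl,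
      sval_c_of f hf ⟨k, hkN⟩, ih (le_of_lt hkN)]
    ring

lemma psum_nonneg_of_path {n j : ℕ} (f : Fin (N + 1) → ℕ) (hf : IsPathWHom (N + 1) n f)
    (h0 : f ⟨0, Nat.succ_pos N⟩ = j) (k : ℕ) (hk : k ≤ N) :
    -(j : ℤ) ≤ psum (c_of f) k := by
  have := f_eq_psum f hf h0 k hk
  have h2 : (0 : ℤ) ≤ (f ⟨k, Nat.lt_succ_of_le hk⟩ : ℤ) := Int.natCast_nonneg _
  omega

lemma f_of_c_of {n j : ℕ} (f : Fin (N + 1) → ℕ) (hf : IsPathWHom (N + 1) n f)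
    (h0 : f ⟨0, Nat.succ_pos N⟩ = j) : f_of j (c_of f) = f := by
  funext k
  have hk : k.1 ≤ N := Nat.lt_succ_iff.1 k.isLt
  have := f_eq_psum f hf h0 k.1 hk
  rw [f_of, ← this]
  simp [Fin.eta]

lemma c_of_f_of (j : ℕ) (c : Fin N → Fin 3)
    (hc : ∀ k ≤ N, -(j : ℤ) ≤ psum c k) : c_of (f_of j c) = c := by
  funext i
  have hlt : i.1 < N := i.isLt
  have e1 : (f_of j c ⟨i.1, i.isLt.trans (Nat.lt_succ_self N)⟩ : ℤ) = j + psum c i.1 := by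
    rw [f_of]
    simp only [show ((⟨i.1, i.isLt.trans (Nat.lt_succ_self N)⟩ : Fin (N + 1)) : ℕ) = i.1 from rfl]
    exact Int.toNat_of_nonneg (by have := hc i.1 (le_of_lt hlt); omega)
  have e2 : (f_of j c ⟨i.1 + 1, Nat.succ_lt_succ i.isLt⟩ : ℤ) = j + psum c (i.1 + 1) := by
    rw [f_of]
    simp only [show ((⟨i.1 + 1, Nat.succ_lt_succ i.isLt⟩ : Fin (N + 1)) : ℕ) = i.1 + 1 from rfl]
    exact Int.toNat_of_nonneg (by have := hc (i.1 + 1) hlt; omega)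
  have e3 : psum c (i.1 + 1) = psum c i.1 + sval (c ⟨i.1, hlt⟩) := psum_succ c i.1 hlt
  have hi : (⟨i.1, hlt⟩ : Fin N) = i := Fin.eta i hlt
  rw [hi] at e3
  rcases (show c i = 0 ∨ c i = 1 ∨ c i = 2 from by omega) with h | h | h
  · rw [h, show sval 0 = -1 from by decide] at e3
    rw [h, c_of_eq_zero_iff]
    omega
  · rw [h, show sval 1 = 0 from by decide] at e3
    rw [h, c_of]
    split_ifs with h1 h2
    · exfalso; omega
    · exfalso; omega
    · rfl
  · rw [h, show sval 2 = 1 from by decide] at e3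
    rw [h, c_of_eq_two_iff]
    omega

lemma downSteps_eq (f : Fin (N + 1) → ℕ) : downSteps (N + 1) f = downs (c_of f) := by
  have e : {x : ℕ // ∃ h : x + 1 < N + 1, f ⟨x, Nat.lt_of_succ_lt h⟩ = f ⟨x + 1, h⟩ + 1}
      ≃ {i : Fin N // c_of f i = 0} :=
    { toFun := fun x => ⟨⟨x.1, by obtain ⟨h, _⟩ := x.2; omega⟩, by
        obtain ⟨h, hh⟩ := x.2
        exact (c_of_eq_zero_iff f _).2 hh⟩
      invFun := fun i => ⟨i.1.1, ⟨Nat.succ_lt_succ i.1.isLt, (c_of_eq_zero_iff f i.1).1 i.2⟩⟩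
      left_inv := fun x => Subtype.ext rfl
      right_inv := fun i => Subtype.ext (Fin.ext rfl) }
  rw [downSteps, Nat.card_congr e, Nat.card_eq_fintype_card, Fintype.card_subtype, downs]

lemma uk_le_ups (c : Fin N → Fin 3) (k : ℕ) : uk c k ≤ ups c := by
  apply Finset.card_le_card
  intro i hi
  simp only [Finset.mem_filter] at hi ⊢
  tauto

lemma psum_le_ups (c : Fin N → Fin 3) (k : ℕ) : psum c k ≤ (ups c : ℤ) := by
  rw [psum_eq_uk_dk]
  have := uk_le_ups c k
  omega

lemma f_of_val (j : ℕ) (c : Fin N → Fin 3) (hc : ∀ k ≤ N, -(j : ℤ) ≤ psum c k)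
    (k : ℕ) (hk : k < N + 1) :
    (f_of j c ⟨k, hk⟩ : ℤ) = j + psum c k := by
  rw [f_of]
  simp only [show ((⟨k, hk⟩ : Fin (N + 1)) : ℕ) = k from rfl]
  exact Int.toNat_of_nonneg (by have := hc k (Nat.lt_succ_iff.1 hk); omega)

lemma card_paths_eq (n j : ℕ) (hn : N + 1 ≤ n) :
    Nat.card {f : Fin (N + 1) → ℕ // IsPathWHom (N + 1) n f ∧
        (∀ h : 0 < N + 1, f ⟨0, h⟩ = j) ∧ j < downSteps (N + 1) f}
      = ((univ : Finset (Fin N → Fin 3)).filter fun c =>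
          (∀ k ≤ N, -(j : ℤ) ≤ psum c k) ∧ j < downs c).card := by
  classical
  have e : {f : Fin (N + 1) → ℕ // IsPathWHom (N + 1) n f ∧
        (∀ h : 0 < N + 1, f ⟨0, h⟩ = j) ∧ j < downSteps (N + 1) f}
      ≃ {c : Fin N → Fin 3 // (∀ k ≤ N, -(j : ℤ) ≤ psum c k) ∧ j < downs c} := by
    refine
      { toFun := fun f => ⟨c_of f.1, ?_, ?_⟩
        invFun := fun c => ⟨f_of j c.1, ?_, ?_, ?_⟩
        left_inv := ?_
        right_inv := ?_ }
    · exact fun k hk => psum_nonneg_of_path f.1 f.2.1 (f.2.2.1 (Nat.succ_pos N)) k hk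
    · rw [← downSteps_eq]; exact f.2.2.2
    · -- IsPathWHom
      have hc := c.2.1
      have hd := c.2.2
      constructor
      · intro x
        have hx : x.1 < N + 1 := x.isLt
        have e1 : (f_of j c.1 ⟨x.1, hx⟩ : ℤ) = j + psum c.1 x.1 := f_of_val j c.1 hc x.1 hx
        have h2 := psum_le_ups c.1 x.1
        have h3 := ups_add_downs_le c.1
        have h4 : (f_of j c.1 x : ℤ) = (f_of j c.1 ⟨x.1, hx⟩ : ℤ) := by rw [Fin.eta]
        omega
      · intro x h
        have hxN : x < N := by omega
        have e1 : (f_of j c.1 ⟨x, Nat.lt_of_succ_lt h⟩ : ℤ) = j + psum c.1 x :=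
          f_of_val j c.1 hc x (Nat.lt_of_succ_lt h)
        have e2 : (f_of j c.1 ⟨x + 1, h⟩ : ℤ) = j + psum c.1 (x + 1) :=
          f_of_val j c.1 hc (x + 1) h
        have e3 : psum c.1 (x + 1) = psum c.1 x + sval (c.1 ⟨x, hxN⟩) := psum_succ c.1 x hxN
        rcases (show c.1 ⟨x, hxN⟩ = 0 ∨ c.1 ⟨x, hxN⟩ = 1 ∨ c.1 ⟨x, hxN⟩ = 2 from by omega)
          with hv | hv | hv <;>
          rw [hv] at e3
        · rw [show sval 0 = -1 from by decide] at e3; omega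
        · rw [show sval 1 = 0 from by decide] at e3; omega
        · rw [show sval 2 = 1 from by decide] at e3; omega
    · -- f 0 = j
      intro _
      have := f_of_val j c.1 c.2.1 0 (Nat.succ_pos N)
      rw [psum_zero] at this
      omega
    · -- downSteps
      rw [downSteps_eq, c_of_f_of j c.1 c.2.1]
      exact c.2.2
    · -- left_inv
      intro f
      exact Subtype.ext (f_of_c_of f.1 f.2.1 (f.2.2.1 (Nat.succ_pos N)))
    · -- right_inv
      intro c
      exact Subtype.ext (c_of_f_of j c.1 c.2.1)
  rw [Nat.card_congr e, Nat.card_eq_fintype_card, Fintype.card_subtype]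

lemma multi3_cast (n a b c : ℕ) (h : a + b + c = n) :
    multi3 (n : ℤ) (a : ℤ) (b : ℤ) (c : ℤ) = n ! / (a ! * b ! * c !) := by
  rw [multi3, if_pos ⟨Int.natCast_nonneg a, Int.natCast_nonneg b, Int.natCast_nonneg c,
    by exact_mod_cast h⟩]
  simp

lemma sum_Icc_cast (a b : ℕ) (g : ℤ → ℤ) :
    ∑ x ∈ Finset.Icc (a : ℤ) (b : ℤ), g x = ∑ x ∈ Finset.Icc a b, g ↑x := by
  refine Finset.sum_nbij' (fun x : ℤ => x.toNat) (fun x : ℕ => (x : ℤ)) ?_ ?_ ?_ ?_ ?_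
  · intro x hx
    simp only [Finset.mem_Icc] at hx ⊢
    omega
  · intro x hx
    simp only [Finset.mem_Icc] at hx ⊢
    omega
  · intro x hx
    simp only [Finset.mem_Icc] at hx
    exact Int.toNat_of_nonneg (by omega)
  · intro x hx
    simp
  · intro x hx
    simp only [Finset.mem_Icc] at hx
    exact (congrArg g (Int.toNat_of_nonneg (by omega))).symm

end Whom1

open Whom1 Finset Nat

/-- Case 1: for `m ≤ n`, `j < n`, the number of weak homomorphisms
`f : P_m → P_n` with `f(0) = j` whose number of down-steps strictly exceeds `j` equals
`Σ_{t=j+1}^{j+⌊(m−j−1)/2⌋} Σ_{s=t−j}^{m−1−t}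
  [binom(m−1; s,t,m−1−s−t) − binom(m−1; t−j−1, s+j+1, m−1−s−t)]`. -/


theorem whomCount_case1 (m n j : ℕ) (hm : 0 < m) (hn : 0 < n)
    (hmn : m ≤ n) (hj : j < n) :
    (Nat.card {f : Fin m → ℕ //
        IsPathWHom m n f ∧ (∀ h : 0 < m, f ⟨0, h⟩ = j) ∧ j < downSteps m f} : ℤ) =
      ∑ t ∈ Finset.Icc ((j : ℤ) + 1) ((j : ℤ) + ⌊((m : ℚ) - j - 1) / 2⌋),
        ∑ s ∈ Finset.Icc (t - (j : ℤ)) ((m : ℤ) - 1 - t),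
          ((multi3 ((m : ℤ) - 1) s t ((m : ℤ) - 1 - s - t) : ℤ) -
            (multi3 ((m : ℤ) - 1) (t - (j : ℤ) - 1) (s + (j : ℤ) + 1)
              ((m : ℤ) - 1 - s - t) : ℤ)) := by
  classical
  obtain ⟨N, rfl⟩ : ∃ N, m = N + 1 := ⟨m - 1, by omega⟩
  rw [Whom1.card_paths_eq n j hmn]
  have hfloor : ⌊(((N + 1 : ℕ) : ℚ) - j - 1) / 2⌋ = ((N : ℤ) - j) / 2 := by
    rw [show (((N + 1 : ℕ) : ℚ)) - j - 1 = ((((N : ℤ) - j) : ℤ) : ℚ) by push_cast; ring,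
      show (2 : ℚ) = ((2 : ℕ) : ℚ) by norm_num, Rat.floor_intCast_div_natCast]
    norm_num
  rw [hfloor]
  by_cases hjN : j ≤ N
  swap
  · -- degenerate case: j > N, both sides vanish
    have hempty : ((univ : Finset (Fin N → Fin 3)).filter fun c =>
        (∀ k ≤ N, -(j : ℤ) ≤ psum c k) ∧ j < downs c) = ∅ := by
      ext c
      simp only [Finset.mem_filter, Finset.mem_univ, true_and, Finset.notMem_empty,
        iff_false, not_and]
      intro _
      have := ups_add_downs_le c
      omega
    have hIcc : Finset.Icc ((j : ℤ) + 1) ((j : ℤ) + ((N : ℤ) - j) / 2) = ∅ :=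
      Finset.Icc_eq_empty (by omega)
    rw [hempty, hIcc]
    simp
  -- main case
  set F : ℕ := (N - j) / 2 with hF
  have hub : ((N : ℤ) - j) / 2 = (F : ℤ) := by omega
  rw [hub]
  set A := ((univ : Finset (Fin N → Fin 3)).filter fun c =>
      (∀ k ≤ N, -(j : ℤ) ≤ psum c k) ∧ j < downs c) with hA
  -- facts about members of A
  have hmem : ∀ c ∈ A, (∀ k ≤ N, -(j : ℤ) ≤ psum c k) ∧ j < downs c ∧
      (-(j : ℤ) ≤ (ups c : ℤ) - downs c) ∧ ups c + downs c ≤ N := by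
    intro c hc
    rw [hA, Finset.mem_filter] at hc
    refine ⟨hc.2.1, hc.2.2, ?_, ups_add_downs_le c⟩
    have := hc.2.1 N le_rfl
    rw [psum_top] at this
    omega
  -- step 1a: fiber by downs
  have h1 : A.card = ∑ t ∈ Finset.Icc (j + 1) (j + F), (A.filter fun c => downs c = t).card := by
    apply Finset.card_eq_sum_card_fiberwise
    intro c hc
    obtain ⟨_, h2, h3, h4⟩ := hmem c hc
    simp only [Finset.mem_coe, Finset.mem_Icc]
    omega
  -- step 1b: fiber by ups
  have h2 : ∀ t ∈ Finset.Icc (j + 1) (j + F), (A.filter fun c => downs c = t).card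
      = ∑ s ∈ Finset.Icc (t - j) (N - t),
          ((univ : Finset (Fin N → Fin 3)).filter fun c => ups c = s ∧ downs c = t ∧
            ∀ k ≤ N, -(j : ℤ) ≤ psum c k).card := by
    intro t ht
    simp only [Finset.mem_Icc] at ht
    rw [Finset.card_eq_sum_card_fiberwise (t := Finset.Icc (t - j) (N - t))
      (f := fun c => ups c)]
    · apply Finset.sum_congr rfl
      intro s hs
      simp only [Finset.mem_Icc] at hs
      congr 1
      rw [Finset.filter_filter, hA, Finset.filter_filter]
      apply Finset.filter_congr
      intro c _
      constructor
      · rintro ⟨⟨hpre, _⟩, hdt, hus⟩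
        exact ⟨hus, hdt, hpre⟩
      · rintro ⟨hus, hdt, hpre⟩
        exact ⟨⟨hpre, by omega⟩, hdt, hus⟩
    · intro c hc
      rw [Finset.mem_coe, Finset.mem_filter] at hc
      obtain ⟨_, hp2, hp3, hp4⟩ := hmem c hc.1
      simp only [Finset.mem_coe, Finset.mem_Icc]
      omega
  -- step 2: each fiber counted by reflection
  have h3 : ∀ t s : ℕ, j + 1 ≤ t → t ≤ j + F → t - j ≤ s → s ≤ N - t →
      (((univ : Finset (Fin N → Fin 3)).filter fun c => ups c = s ∧ downs c = t ∧
          ∀ k ≤ N, -(j : ℤ) ≤ psum c k).card : ℤ)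
        = (multi3 ((N : ℤ)) (s : ℤ) (t : ℤ) ((N : ℤ) - s - t) : ℤ)
          - (multi3 ((N : ℤ)) (((t - j : ℕ) : ℤ) - 1) ((s : ℤ) + j + 1) ((N : ℤ) - s - t) : ℤ) := by
    intro t s ht1 ht2 hs1 hs2
    have htN : t ≤ N := by omega
    have hst : s + t ≤ N := by omega
    have hkey := card_good (N := N) j s t ht1 (by omega) hst
    have e1 : multi3 ((N : ℤ)) (s : ℤ) (t : ℤ) ((N : ℤ) - s - t)
        = N ! / (s ! * t ! * (N - s - t)!) := by
      rw [show ((N : ℤ) - s - t) = ((N - s - t : ℕ) : ℤ) by omega]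
      exact multi3_cast N s t (N - s - t) (by omega)
    have e2 : multi3 ((N : ℤ)) (((t - j : ℕ) : ℤ) - 1) ((s : ℤ) + j + 1) ((N : ℤ) - s - t)
        = N ! / ((t - j - 1)! * (s + j + 1)! * (N - s - t)!) := by
      rw [show (((t - j : ℕ) : ℤ) - 1) = ((t - j - 1 : ℕ) : ℤ) by omega,
        show ((s : ℤ) + j + 1) = ((s + j + 1 : ℕ) : ℤ) by omega,
        show ((N : ℤ) - s - t) = ((N - s - t : ℕ) : ℤ) by omega]
      exact multi3_cast N (t - j - 1) (s + j + 1) (N - s - t) (by omega)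
    rw [e1, e2]
    omega
  -- assemble
  rw [show (((N + 1 : ℕ) : ℤ)) - 1 = (N : ℤ) by push_cast; ring]
  rw [show ((j : ℤ) + F) = ((j + F : ℕ) : ℤ) by push_cast; ring,
    show ((j : ℤ) + 1) = ((j + 1 : ℕ) : ℤ) by push_cast; ring,
    sum_Icc_cast]
  rw [h1, Finset.sum_congr rfl h2]
  push_cast
  apply Finset.sum_congr rfl
  intro t ht
  simp only [Finset.mem_Icc] at ht
  rw [show ((t : ℤ) - j) = ((t - j : ℕ) : ℤ) by omega,
    show ((N : ℤ) - t) = ((N - t : ℕ) : ℤ) by omega, sum_Icc_cast]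
  apply Finset.sum_congr rfl
  intro s hs
  simp only [Finset.mem_Icc] at hs
  exact h3 t s (by omega) (by omega) (by omega) (by omega)
end

section
/- Case 3 of the main counting theorem: let m, n be positive integers and j a non-negative integer with m ≤ n and j < n. The number of weak homomorphisms f from P_m to P_n with f(0) = j such that the number of steps x with f(x+1) = f(x) − 1 is at most j − n + m and the number of steps x with f(x+1) = f(x) + 1 is at most n − j − 1 equals Σ_{t=0}^{j−n+m} Σ_{s=0}^{n−j−1} binom(m−1; s, t, m−1−s−t), where sums whose upper limit is below their lower limit are 0. -/
/-- The number of steps `x` with `f(x+1) = f(x) + 1`. -/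
noncomputable def upSteps (m : ℕ) (f : Fin m → ℕ) : ℕ :=
  Nat.card {x : ℕ // ∃ h : x + 1 < m, f ⟨x + 1, h⟩ = f ⟨x, Nat.lt_of_succ_lt h⟩ + 1}


open Finset
def stepVal : Fin 3 → ℤ
  | 0 => 0
  | 1 => 1
  | 2 => -1

lemma fin3_cases (v : Fin 3) : v = 0 ∨ v = 1 ∨ v = 2 := by revert v; decide

lemma stepVal_le (v : Fin 3) : stepVal v ≤ if v = 1 then 1 else 0 := by revert v; decide

lemma neg_le_stepVal (v : Fin 3) : -(if v = 2 then 1 else 0) ≤ stepVal v := by revert v; decide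

def pathOf {N : ℕ} (j : ℕ) (σ : Fin N → Fin 3) (k : ℕ) : ℤ :=
  j + ∑ i ∈ univ.filter (fun i : Fin N => (i : ℕ) < k), stepVal (σ i)

lemma pathOf_zero {N : ℕ} (j : ℕ) (σ : Fin N → Fin 3) : pathOf j σ 0 = j := by
  simp [pathOf]

lemma pathOf_succ {N : ℕ} (j : ℕ) (σ : Fin N → Fin 3) (x : Fin N) :
    pathOf j σ (x.1 + 1) = pathOf j σ x.1 + stepVal (σ x) := by
  have hset : (univ.filter (fun i : Fin N => (i : ℕ) < x.1 + 1))
      = insert x (univ.filter (fun i : Fin N => (i : ℕ) < x.1)) := by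
    ext i
    simp only [mem_filter, mem_univ, true_and, mem_insert, Fin.ext_iff]
    omega
  rw [pathOf, hset, Finset.sum_insert (by simp)]
  simp [pathOf]
  ring

lemma pathOf_le {N : ℕ} (j : ℕ) (σ : Fin N → Fin 3) (k : ℕ) :
    pathOf j σ k ≤ j + (univ.filter (fun i => σ i = 1)).card := by
  have h1 : ∑ i ∈ univ.filter (fun i : Fin N => (i : ℕ) < k), stepVal (σ i)
      ≤ ∑ i ∈ univ.filter (fun i : Fin N => (i : ℕ) < k), (if σ i = 1 then (1:ℤ) else 0) :=
    Finset.sum_le_sum fun i _ => stepVal_le (σ i)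
  have h2 : ∑ i ∈ univ.filter (fun i : Fin N => (i : ℕ) < k), (if σ i = 1 then (1:ℤ) else 0)
      = ((univ.filter (fun i : Fin N => (i : ℕ) < k)).filter (fun i => σ i = 1)).card := by
    rw [Finset.sum_boole]
  have h3 : ((univ.filter (fun i : Fin N => (i : ℕ) < k)).filter (fun i => σ i = 1)).card
      ≤ (univ.filter (fun i : Fin N => σ i = 1)).card := by
    apply Finset.card_le_card
    intro i hi
    simp only [mem_filter, mem_univ, true_and] at hi ⊢
    exact hi.2
  rw [pathOf]
  have h4 := h1.trans_eq h2
  have h5 := (Nat.cast_le (α := ℤ)).2 h3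
  linarith

lemma le_pathOf {N : ℕ} (j : ℕ) (σ : Fin N → Fin 3) (k : ℕ) :
    (j : ℤ) - (univ.filter (fun i => σ i = 2)).card ≤ pathOf j σ k := by
  have h1 : ∑ i ∈ univ.filter (fun i : Fin N => (i : ℕ) < k), -(if σ i = 2 then (1:ℤ) else 0)
      ≤ ∑ i ∈ univ.filter (fun i : Fin N => (i : ℕ) < k), stepVal (σ i) :=
    Finset.sum_le_sum fun i _ => neg_le_stepVal (σ i)
  have h2 : ∑ i ∈ univ.filter (fun i : Fin N => (i : ℕ) < k), (if σ i = 2 then (1:ℤ) else 0)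
      = ((univ.filter (fun i : Fin N => (i : ℕ) < k)).filter (fun i => σ i = 2)).card := by
    rw [Finset.sum_boole]
  have h3 : ((univ.filter (fun i : Fin N => (i : ℕ) < k)).filter (fun i => σ i = 2)).card
      ≤ (univ.filter (fun i : Fin N => σ i = 2)).card := by
    apply Finset.card_le_card
    intro i hi
    simp only [mem_filter, mem_univ, true_and] at hi ⊢
    exact hi.2
  rw [Finset.sum_neg_distrib, h2] at h1
  rw [pathOf]
  have := (Nat.cast_le (α := ℤ)).2 h3
  linarith

section
variable {N : ℕ}

lemma natCard_steps (Q : Fin N → Prop) [DecidablePred Q] :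
    Nat.card {x : ℕ // ∃ h : x + 1 < N + 1, Q ⟨x, Nat.lt_of_succ_lt_succ h⟩} =
      (univ.filter Q).card := by
  have e : {x : ℕ // ∃ h : x + 1 < N + 1, Q ⟨x, Nat.lt_of_succ_lt_succ h⟩} ≃ {x : Fin N // Q x} :=
  { toFun := fun p => ⟨⟨p.1, by obtain ⟨h, _⟩ := p.2; omega⟩,
      by obtain ⟨h, hq⟩ := p.2; exact hq⟩
    invFun := fun q => ⟨q.1.1, ⟨by have := q.1.2; omega, q.2⟩⟩
    left_inv := fun p => rfl
    right_inv := fun q => rfl }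
  rw [Nat.card_congr e, Nat.card_eq_fintype_card, Fintype.card_subtype]

def stepsOf (f : Fin (N + 1) → ℕ) : Fin N → Fin 3 := fun x =>
  if f ⟨x.1 + 1, Nat.succ_lt_succ x.2⟩ = f ⟨x.1, Nat.lt_succ_of_lt x.2⟩ + 1 then 1
  else if f ⟨x.1, Nat.lt_succ_of_lt x.2⟩ = f ⟨x.1 + 1, Nat.succ_lt_succ x.2⟩ + 1 then 2
  else 0

lemma stepsOf_eq_one_iff (f : Fin (N + 1) → ℕ) (x : Fin N) :
    stepsOf f x = 1 ↔ f ⟨x.1 + 1, Nat.succ_lt_succ x.2⟩ = f ⟨x.1, Nat.lt_succ_of_lt x.2⟩ + 1 := by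
  unfold stepsOf
  split_ifs with h1 h2 <;> simp_all

lemma stepsOf_eq_two_iff (f : Fin (N + 1) → ℕ) (x : Fin N) :
    stepsOf f x = 2 ↔ f ⟨x.1, Nat.lt_succ_of_lt x.2⟩ = f ⟨x.1 + 1, Nat.succ_lt_succ x.2⟩ + 1 := by
  unfold stepsOf
  split_ifs with h1 h2 <;> simp_all <;> omega

lemma downSteps_eq (f : Fin (N + 1) → ℕ) :
    downSteps (N + 1) f = (univ.filter (fun x => stepsOf f x = 2)).card := by
  have h := natCard_steps (N := N)
    (fun x => f ⟨x.1, Nat.lt_succ_of_lt x.2⟩ = f ⟨x.1 + 1, Nat.succ_lt_succ x.2⟩ + 1)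
  rw [downSteps]
  rw [h]
  congr 1
  apply Finset.filter_congr
  intro x _
  simp [stepsOf_eq_two_iff]

lemma upSteps_eq (f : Fin (N + 1) → ℕ) :
    upSteps (N + 1) f = (univ.filter (fun x => stepsOf f x = 1)).card := by
  have h := natCard_steps (N := N)
    (fun x => f ⟨x.1 + 1, Nat.succ_lt_succ x.2⟩ = f ⟨x.1, Nat.lt_succ_of_lt x.2⟩ + 1)
  rw [upSteps, h]
  congr 1
  apply Finset.filter_congr
  intro x _
  simp [stepsOf_eq_one_iff]

end
section
variable {N : ℕ}

lemma path_eq (f : Fin (N + 1) → ℕ) (j : ℕ)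
    (hstep : ∀ (x : ℕ) (h : x + 1 < N + 1),
      f ⟨x + 1, h⟩ = f ⟨x, Nat.lt_of_succ_lt h⟩ ∨
      f ⟨x + 1, h⟩ = f ⟨x, Nat.lt_of_succ_lt h⟩ + 1 ∨
      f ⟨x, Nat.lt_of_succ_lt h⟩ = f ⟨x + 1, h⟩ + 1)
    (h0 : f ⟨0, Nat.succ_pos N⟩ = j) :
    ∀ (k : ℕ) (hk : k < N + 1), (f ⟨k, hk⟩ : ℤ) = pathOf j (stepsOf f) k := by
  intro k
  induction k with
  | zero => intro hk; rw [pathOf_zero]; exact_mod_cast h0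
  | succ k ih =>
    intro hk
    have hkN : k < N := by omega
    have hp := pathOf_succ j (stepsOf f) ⟨k, hkN⟩
    simp only [Fin.val_mk] at hp
    rw [hp, ← ih (by omega)]
    rcases hstep k hk with h | h | h
    · have hs : stepsOf f ⟨k, hkN⟩ = 0 := by
        unfold stepsOf
        simp only [Fin.val_mk]
        split_ifs with h1 h2
        · omega
        · omega
        · rfl
      rw [hs]
      simp only [stepVal]
      omega
    · have hs : stepsOf f ⟨k, hkN⟩ = 1 := (stepsOf_eq_one_iff f ⟨k, hkN⟩).2 h
      rw [hs]
      simp only [stepVal]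
      omega
    · have hs : stepsOf f ⟨k, hkN⟩ = 2 := (stepsOf_eq_two_iff f ⟨k, hkN⟩).2 h
      rw [hs]
      simp only [stepVal]
      omega

end
section
variable {N : ℕ}

lemma stepsOf_toNat (j : ℕ) (σ : Fin N → Fin 3) (hpos : ∀ k : ℕ, 0 ≤ pathOf j σ k) :
    stepsOf (fun k : Fin (N + 1) => (pathOf j σ k.1).toNat) = σ := by
  funext x
  have hp := pathOf_succ j σ x
  have n1 := hpos x.1
  have n2 := hpos (x.1 + 1)
  rcases fin3_cases (σ x) with h | h | h <;> rw [h] <;> rw [h] at hp <;>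
      simp only [stepVal] at hp <;> unfold stepsOf <;>
      simp only [Fin.val_mk] <;> split_ifs with h1 h2 <;> first | rfl | omega

lemma card_eq_sigma (n j a b : ℕ) (hb : j + b + 1 = n) (ha : a ≤ j) :
    Nat.card {f : Fin (N + 1) → ℕ //
        IsPathWHom (N + 1) n f ∧ (∀ h : 0 < N + 1, f ⟨0, h⟩ = j) ∧
        downSteps (N + 1) f ≤ a ∧ upSteps (N + 1) f ≤ b} =
    ((univ : Finset (Fin N → Fin 3)).filter (fun σ =>
        (univ.filter fun i => σ i = 2).card ≤ a ∧
        (univ.filter fun i => σ i = 1).card ≤ b)).card := by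
  have hpos : ∀ (σ : Fin N → Fin 3), (univ.filter fun i => σ i = 2).card ≤ a →
      ∀ k : ℕ, 0 ≤ pathOf j σ k := by
    intro σ hd k
    have h := le_pathOf j σ k
    omega
  have e : {f : Fin (N + 1) → ℕ //
        IsPathWHom (N + 1) n f ∧ (∀ h : 0 < N + 1, f ⟨0, h⟩ = j) ∧
        downSteps (N + 1) f ≤ a ∧ upSteps (N + 1) f ≤ b} ≃
      {σ : Fin N → Fin 3 //
        (univ.filter fun i => σ i = 2).card ≤ a ∧ (univ.filter fun i => σ i = 1).card ≤ b} :=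
  { toFun := fun p => ⟨stepsOf p.1, by
      have h1 := p.2.2.2.1
      have h2 := p.2.2.2.2
      rw [downSteps_eq] at h1
      rw [upSteps_eq] at h2
      exact ⟨h1, h2⟩⟩
    invFun := fun q => ⟨fun k => (pathOf j q.1 k.1).toNat, by
      have hd := q.2.1
      have hu := q.2.2
      have hp0 := hpos q.1 hd
      refine ⟨⟨?_, ?_⟩, ?_, ?_, ?_⟩
      · intro x
        show (pathOf j q.1 x.1).toNat < n
        have h := pathOf_le j q.1 x.1
        have h2 := hp0 x.1
        omega
      · intro x hx
        have hxN : x < N := by omega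
        have hp := pathOf_succ j q.1 ⟨x, hxN⟩
        simp only [Fin.val_mk] at hp
        have h1 := hp0 x
        have h2 := hp0 (x + 1)
        show (pathOf j q.1 (x + 1)).toNat = (pathOf j q.1 x).toNat ∨
          (pathOf j q.1 (x + 1)).toNat = (pathOf j q.1 x).toNat + 1 ∨
          (pathOf j q.1 x).toNat = (pathOf j q.1 (x + 1)).toNat + 1
        rcases fin3_cases (q.1 ⟨x, hxN⟩) with h | h | h <;> rw [h] at hp <;>
          simp only [stepVal] at hp <;> omega
      · intro _
        show (pathOf j q.1 0).toNat = j
        rw [pathOf_zero]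
        exact Int.toNat_natCast j
      · rw [downSteps_eq, stepsOf_toNat j q.1 hp0]
        exact hd
      · rw [upSteps_eq, stepsOf_toNat j q.1 hp0]
        exact hu⟩
    left_inv := fun p => by
      apply Subtype.ext
      funext k
      have h := path_eq p.1 j p.2.1.2 (p.2.2.1 (Nat.succ_pos N)) k.1 k.2
      simp only [Fin.eta] at h
      simp only [← h, Int.toNat_natCast]
    right_inv := fun q => Subtype.ext (stepsOf_toNat j q.1 (hpos q.1 q.2.1)) }
  rw [Nat.card_congr e, Nat.card_eq_fintype_card, Fintype.card_subtype]

end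
section

lemma count_fiber (N s t : ℕ) :
    ((univ : Finset (Fin N → Fin 3)).filter (fun σ =>
        (univ.filter fun i => σ i = 1).card = s ∧
        (univ.filter fun i => σ i = 2).card = t)).card
      = N.choose s * (N - s).choose t := by
  have hfib : ∀ p : (_ : Finset (Fin N)) × Finset (Fin N), (∀ x ∈ p.2, x ∉ p.1) →
      (univ.filter fun i =>
        (if i ∈ p.1 then (1 : Fin 3) else if i ∈ p.2 then 2 else 0) = 1) = p.1 ∧
      (univ.filter fun i =>
        (if i ∈ p.1 then (1 : Fin 3) else if i ∈ p.2 then 2 else 0) = 2) = p.2 := by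
    intro p hd
    constructor
    · ext x
      simp only [Finset.mem_filter, Finset.mem_univ, true_and]
      split_ifs with ha hb
      · simp [ha]
      · simp [ha]
      · simp [ha]
    · ext x
      simp only [Finset.mem_filter, Finset.mem_univ, true_and]
      split_ifs with ha hb
      · simp [show x ∉ p.2 from fun hx => hd x hx ha]
      · simp [hb]
      · simp [hb]
  have key : ((univ : Finset (Fin N → Fin 3)).filter (fun σ =>
        (univ.filter fun i => σ i = 1).card = s ∧
        (univ.filter fun i => σ i = 2).card = t)).card
      = (((univ : Finset (Fin N)).powersetCard s).sigma (fun S => Sᶜ.powersetCard t)).card := by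
    apply Finset.card_bij'
      (i := fun σ _ => ⟨univ.filter fun i => σ i = 1, univ.filter fun i => σ i = 2⟩)
      (j := fun p _ => fun x => if x ∈ p.1 then 1 else if x ∈ p.2 then 2 else 0)
    · intro σ hσ
      funext x
      rcases fin3_cases (σ x) with h | h | h <;> simp [h]
    · intro p hp
      simp only [Finset.mem_sigma, Finset.mem_powersetCard] at hp
      have hd : ∀ x ∈ p.2, x ∉ p.1 := fun x hx => by simpa using hp.2.1 hx
      obtain ⟨h1, h2⟩ := hfib p hd
      obtain ⟨A, B⟩ := p
      simp only at h1 h2 ⊢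
      rw [h1, h2]
    · intro σ hσ
      simp only [Finset.mem_filter, Finset.mem_univ, true_and] at hσ
      simp only [Finset.mem_sigma, Finset.mem_powersetCard]
      refine ⟨⟨Finset.subset_univ _, hσ.1⟩, ?_, hσ.2⟩
      intro x hx
      simp only [Finset.mem_filter, Finset.mem_univ, true_and] at hx
      simp only [Finset.mem_compl, Finset.mem_filter, Finset.mem_univ, true_and]
      simp [hx]
    · intro p hp
      simp only [Finset.mem_sigma, Finset.mem_powersetCard] at hp
      have hd : ∀ x ∈ p.2, x ∉ p.1 := fun x hx => by simpa using hp.2.1 hx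
      obtain ⟨h1, h2⟩ := hfib p hd
      simp only [Finset.mem_filter, Finset.mem_univ, true_and]
      rw [h1, h2]
      exact ⟨hp.1.2, hp.2.2⟩
  rw [key, Finset.card_sigma]
  have hc : ∀ S ∈ (univ : Finset (Fin N)).powersetCard s,
      (Sᶜ.powersetCard t).card = (N - s).choose t := by
    intro S hS
    rw [Finset.card_powersetCard, Finset.card_compl, Fintype.card_fin]
    simp only [Finset.mem_powersetCard] at hS
    rw [hS.2]
  rw [Finset.sum_congr rfl hc, Finset.sum_const, Finset.card_powersetCard, Finset.card_univ,
    Fintype.card_fin, smul_eq_mul]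

end
section

lemma count_sigma (N a b : ℕ) :
    ((univ : Finset (Fin N → Fin 3)).filter (fun σ =>
        (univ.filter fun i => σ i = 2).card ≤ a ∧
        (univ.filter fun i => σ i = 1).card ≤ b)).card
      = ∑ t ∈ Finset.range (a + 1), ∑ s ∈ Finset.range (b + 1),
          N.choose s * (N - s).choose t := by
  rw [Finset.card_eq_sum_card_fiberwise (f := fun σ : Fin N → Fin 3 =>
      ((univ.filter fun i => σ i = 2).card, (univ.filter fun i => σ i = 1).card))
      (t := Finset.range (a + 1) ×ˢ Finset.range (b + 1))
      (by
        intro σ hσ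
        simp only [Finset.mem_coe, Finset.mem_filter, Finset.mem_univ, true_and] at hσ
        simp only [Finset.mem_coe, Finset.mem_product, Finset.mem_range]
        omega)]
  rw [Finset.sum_product]
  apply Finset.sum_congr rfl
  intro t ht
  apply Finset.sum_congr rfl
  intro s hs
  rw [← count_fiber N s t]
  congr 1
  ext σ
  simp only [Finset.mem_filter, Finset.mem_univ, true_and, Finset.mem_range, Prod.mk.injEq] at *
  constructor
  · rintro ⟨⟨_, _⟩, h1, h2⟩
    exact ⟨h2, h1⟩
  · rintro ⟨h1, h2⟩
    exact ⟨⟨by omega, by omega⟩, h2, h1⟩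

lemma multi3_eq (N s t : ℕ) :
    multi3 (N : ℤ) (s : ℤ) (t : ℤ) ((N : ℤ) - s - t) = N.choose s * (N - s).choose t := by
  by_cases h : s + t ≤ N
  · rw [multi3, if_pos (by constructor <;> omega)]
    have e1 : ((N : ℤ)).toNat = N := rfl
    have e2 : ((s : ℤ)).toNat = s := rfl
    have e3 : ((t : ℤ)).toNat = t := rfl
    have e4 : ((N : ℤ) - s - t).toNat = N - s - t := by omega
    rw [e1, e2, e3, e4]
    have h1 := Nat.choose_mul_factorial_mul_factorial (show s ≤ N by omega)
    have h2 := Nat.choose_mul_factorial_mul_factorial (show t ≤ N - s by omega)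
    have hNs : N - (N - s) = s := by omega
    have hfac : N.factorial
        = (N.choose s * (N - s).choose t) * (s.factorial * t.factorial * (N - s - t).factorial) := by
      rw [← h1]
      have : N - s - t = (N - s) - t := by omega
      rw [this, ← h2]
      ring
    rw [hfac, Nat.mul_div_cancel _ (by positivity)]
  · rw [multi3, if_neg (by rintro ⟨-, -, h3, -⟩; omega)]
    rcases Nat.lt_or_ge N s with hs | hs
    · have h0 : N.choose s = 0 := Nat.choose_eq_zero_of_lt hs
      simp [h0]
    · have h0 : (N - s).choose t = 0 := Nat.choose_eq_zero_of_lt (by omega)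
      simp [h0]

lemma sum_Icc_int (A : ℕ) (g : ℤ → ℤ) :
    ∑ x ∈ Finset.Icc (0 : ℤ) (A : ℤ), g x = ∑ x ∈ Finset.range (A + 1), g x := by
  apply Finset.sum_nbij' (i := fun x : ℤ => x.toNat) (j := fun x : ℕ => (x : ℤ))
  · intro x hx
    simp only [Finset.mem_Icc] at hx
    simp only [Finset.mem_range]
    omega
  · intro x hx
    simp only [Finset.mem_range] at hx
    simp only [Finset.mem_Icc]
    omega
  · intro x hx
    simp only [Finset.mem_Icc] at hx
    omega
  · intro x _
    simp
  · intro x hx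
    simp only [Finset.mem_Icc] at hx
    rw [Int.toNat_of_nonneg hx.1]

end
/-- Case 3: for `m ≤ n`, `j < n`, the number of weak homomorphisms
`f : P_m → P_n` with `f(0) = j` whose number of down-steps is at most `j − n + m` and
whose number of up-steps is at most `n − j − 1` equals
`Σ_{t=0}^{j−n+m} Σ_{s=0}^{n−j−1} binom(m−1; s, t, m−1−s−t)`. -/
theorem whomCount_case3 (m n j : ℕ) (hm : 0 < m) (hn : 0 < n)
    (hmn : m ≤ n) (hj : j < n) :
    (Nat.card {f : Fin m → ℕ //
        IsPathWHom m n f ∧ (∀ h : 0 < m, f ⟨0, h⟩ = j) ∧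
        (downSteps m f : ℤ) ≤ (j : ℤ) - n + m ∧
        (upSteps m f : ℤ) ≤ (n : ℤ) - j - 1} : ℤ) =
      ∑ t ∈ Finset.Icc (0 : ℤ) ((j : ℤ) - n + m),
        ∑ s ∈ Finset.Icc (0 : ℤ) ((n : ℤ) - j - 1),
          (multi3 ((m : ℤ) - 1) s t ((m : ℤ) - 1 - s - t) : ℤ) := by
  obtain ⟨N, rfl⟩ : ∃ N, m = N + 1 := ⟨m - 1, by omega⟩
  by_cases hcase : (j : ℤ) - n + (N + 1 : ℕ) < 0
  · have hIcc : Finset.Icc (0 : ℤ) ((j : ℤ) - n + ((N + 1 : ℕ) : ℤ)) = ∅ :=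
      Finset.Icc_eq_empty (by omega)
    have hempty : IsEmpty {f : Fin (N + 1) → ℕ //
        IsPathWHom (N + 1) n f ∧ (∀ h : 0 < N + 1, f ⟨0, h⟩ = j) ∧
        (downSteps (N + 1) f : ℤ) ≤ (j : ℤ) - n + (N + 1 : ℕ) ∧
        (upSteps (N + 1) f : ℤ) ≤ (n : ℤ) - j - 1} := by
      constructor
      rintro ⟨f, -, -, hd, -⟩
      have h0 : (0 : ℤ) ≤ (downSteps (N + 1) f : ℤ) := Int.natCast_nonneg _
      omega
    rw [hIcc, Finset.sum_empty, @Nat.card_of_isEmpty _ hempty]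
    simp
  · push_neg at hcase
    obtain ⟨a, hA⟩ : ∃ a : ℕ, (j : ℤ) - n + ((N + 1 : ℕ) : ℤ) = a :=
      ⟨((j : ℤ) - n + ((N + 1 : ℕ) : ℤ)).toNat, by omega⟩
    obtain ⟨b, hB⟩ : ∃ b : ℕ, (n : ℤ) - j - 1 = b := ⟨n - j - 1, by omega⟩
    have hmn' : N + 1 ≤ n := hmn
    have ha : a ≤ j := by omega
    have hb : j + b + 1 = n := by omega
    have hL : Nat.card {f : Fin (N + 1) → ℕ //
        IsPathWHom (N + 1) n f ∧ (∀ h : 0 < N + 1, f ⟨0, h⟩ = j) ∧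
        (downSteps (N + 1) f : ℤ) ≤ (j : ℤ) - n + (N + 1 : ℕ) ∧
        (upSteps (N + 1) f : ℤ) ≤ (n : ℤ) - j - 1} =
        Nat.card {f : Fin (N + 1) → ℕ //
        IsPathWHom (N + 1) n f ∧ (∀ h : 0 < N + 1, f ⟨0, h⟩ = j) ∧
        downSteps (N + 1) f ≤ a ∧ upSteps (N + 1) f ≤ b} := by
      apply Nat.card_congr
      apply Equiv.subtypeEquivRight
      intro f
      constructor
      · rintro ⟨h1, h2, h3, h4⟩
        exact ⟨h1, h2, by omega, by omega⟩
      · rintro ⟨h1, h2, h3, h4⟩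
        exact ⟨h1, h2, by omega, by omega⟩
    rw [hL, card_eq_sigma n j a b hb ha, count_sigma N a b, hA, hB]
    rw [sum_Icc_int a, Finset.sum_congr rfl (fun t _ => sum_Icc_int b _)]
    push_cast
    apply Finset.sum_congr rfl
    intro t _
    apply Finset.sum_congr rfl
    intro s _
    have := multi3_eq N s t
    have hcast : ((N : ℤ) + 1 - 1) = (N : ℤ) := by ring
    rw [show ((N : ℤ) + 1 - 1 - (s : ℤ) - (t : ℤ)) = ((N : ℤ) - s - t) by ring, hcast, this]
    push_cast
    ring
end
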